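/- arXiv:2510.08982 — 6 statements merged into one kernel-verified Lean document; each statement's English description precedes it below -/
import Mathlib

section
/- For t ≥ 1 and any nonnegative measurable function f on ℝⁿ, the pointwise inequality (I_α f)^t ≤ A · I_α[f · (I_α f)^{t-1}] holds everywhere in ℝⁿ, for a constant A depending only on n, α, t. Here I_α f(x) = γ(n,α) ∫ |x-y|^{α-n} f(y) dy is the Riesz potential of order α ∈ (0,n). -/
open MeasureTheory ENNReal Set Filter

noncomputable section

/-- Euclidean space ℝⁿ. -/
abbrev Rn (n : ℕ) := EuclideanSpace ℝ (Fin n)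

/-- The normalizing constant γ(n,α) of the Riesz potential. -/
noncomputable def rieszConst (n : ℕ) (α : ℝ) : ℝ :=
  Real.Gamma (((n : ℝ) - α) / 2) / (Real.pi ^ ((n : ℝ) / 2) * 2 ^ α * Real.Gamma (α / 2))

/-- The Riesz potential I_α f(x) = γ(n,α) ∫ |x-y|^{α-n} f(y) dy of a nonnegative function. -/
noncomputable def rieszPotential (n : ℕ) (α : ℝ) (f : Rn n → ℝ≥0∞) (x : Rn n) : ℝ≥0∞ :=
  ENNReal.ofReal (rieszConst n α) * ∫⁻ y, ENNReal.ofReal (‖x - y‖ ^ (α - (n : ℝ))) * f y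

/-- The Riesz capacity cap_{α,s}(E) = inf{‖f‖_{L^s}^s : f ≥ 0, I_α f ≥ 1 on E}. -/
noncomputable def rieszCap (n : ℕ) (α s : ℝ) (E : Set (Rn n)) : ℝ≥0∞ :=
  ⨅ (f : Rn n → ℝ≥0∞) (_ : Measurable f ∧ ∀ x ∈ E, 1 ≤ rieszPotential n α f x),
    ∫⁻ y, f y ^ s

/-- The Choquet integral ∫ g dC = ∫₀^∞ C({g > t}) dt. -/
noncomputable def choquet {n : ℕ} (C : Set (Rn n) → ℝ≥0∞) (g : Rn n → ℝ≥0∞) : ℝ≥0∞ :=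
  ∫⁻ t in Set.Ioi (0 : ℝ), C {x | ENNReal.ofReal t < g x}

/-- The gauge ‖u‖_F = inf{‖f‖_{L^s}^r : f ≥ 0, I_α f ≥ |u|^{1/r} q.e.} (inf ∅ = ⊤). -/
noncomputable def Fgauge (n : ℕ) (α s r : ℝ) (u : Rn n → ℝ≥0∞) : ℝ≥0∞ :=
  ⨅ (f : Rn n → ℝ≥0∞)
    (_ : Measurable f ∧
      rieszCap n α s {x | rieszPotential n α f x < u x ^ (1 / r)} = 0),
    (∫⁻ y, f y ^ s) ^ (r / s)

/-- The Wolff potential W_{α,s}μ(x) = ∫₀^∞ (μ(B_t(x))/t^{n-αs})^{1/(s-1)} dt/t. -/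
noncomputable def wolff (n : ℕ) (α s : ℝ) (μ : Measure (Rn n)) (x : Rn n) : ℝ≥0∞ :=
  ∫⁻ t in Set.Ioi (0 : ℝ),
    (μ (Metric.ball x t) / ENNReal.ofReal (t ^ ((n : ℝ) - α * s))) ^ (1 / (s - 1)) /
      ENNReal.ofReal t

/-- The truncated Wolff potential W^R_{α,s}μ(x) = ∫₀^R (μ(B_t(x))/t^{n-αs})^{1/(s-1)} dt/t. -/
noncomputable def wolffT (n : ℕ) (α s R : ℝ) (μ : Measure (Rn n)) (x : Rn n) : ℝ≥0∞ :=
  ∫⁻ t in Set.Ioc (0 : ℝ) R,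
    (μ (Metric.ball x t) / ENNReal.ofReal (t ^ ((n : ℝ) - α * s))) ^ (1 / (s - 1)) /
      ENNReal.ofReal t

/-- The support of a measure: points all of whose balls have positive measure. -/
def measSupport {n : ℕ} (μ : Measure (Rn n)) : Set (Rn n) :=
  {x | ∀ r > 0, 0 < μ (Metric.ball x r)}

section aux0

variable {n : ℕ}

lemma rieszConst_pos {α : ℝ} (hα : 0 < α) (hαn : α < n) : 0 < rieszConst n α := by
  have h1 : 0 < Real.Gamma (((n : ℝ) - α) / 2) :=
    Real.Gamma_pos_of_pos (by linarith)
  have h2 : 0 < Real.Gamma (α / 2) := Real.Gamma_pos_of_pos (by linarith)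
  have h3 : (0:ℝ) < Real.pi ^ ((n : ℝ) / 2) := Real.rpow_pos_of_pos Real.pi_pos _
  have h4 : (0:ℝ) < (2:ℝ) ^ α := Real.rpow_pos_of_pos (by norm_num) _
  exact div_pos h1 (by positivity)

lemma meas_rpow_const (e : ℝ) : Measurable fun r : ℝ => r ^ e :=
  measurable_of_continuousOn_compl_singleton 0
    (fun r hr => (Real.continuousAt_rpow_const r e (Or.inl hr)).continuousWithinAt)

lemma meas_kern (e : ℝ) (x : Rn n) :
    Measurable fun z : Rn n => ENNReal.ofReal (‖x - z‖ ^ e) :=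
  ((meas_rpow_const e).comp
    (continuous_const.sub continuous_id).norm.measurable).ennreal_ofReal

lemma riesz_measurable {α : ℝ} {f : Rn n → ℝ≥0∞} (hf : Measurable f) :
    Measurable (rieszPotential n α f) := by
  unfold rieszPotential
  refine (Measurable.lintegral_prod_right ?_).const_mul _
  exact (((meas_rpow_const (α - (n:ℝ))).comp
      (continuous_fst.sub continuous_snd).norm.measurable).ennreal_ofReal).mul
    (hf.comp measurable_snd)

lemma nontrivial_Rn (hn : 0 < n) : Nontrivial (Rn n) := by
  apply Module.nontrivial_of_finrank_pos (R := ℝ)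
  rw [finrank_euclideanSpace_fin]
  exact hn

lemma vol_singleton (hn : 0 < n) (y : Rn n) : volume ({y} : Set (Rn n)) = 0 := by
  haveI := nontrivial_Rn hn
  refine measure_mono_null ?_ (Measure.addHaar_sphere volume y 0)
  intro z hz
  simp only [mem_singleton_iff] at hz
  simp [hz, Metric.mem_sphere]

/-- Key geometric estimate: the far part of the potential at `x` is controlled by the
potential at any point `y`. -/
lemma keyA {α : ℝ} (hα : 0 < α) (hαn : α < n) {f : Rn n → ℝ≥0∞} (hf : Measurable f)
    (x y : Rn n) :
    ENNReal.ofReal ((2:ℝ) ^ (α - (n:ℝ))) * ENNReal.ofReal (rieszConst n α) *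
      (∫⁻ z in (Metric.ball x (dist x y))ᶜ, ENNReal.ofReal (‖x - z‖ ^ (α - (n:ℝ))) * f z) ≤
      rieszPotential n α f y := by
  have hn : 0 < n := Nat.cast_pos.mp (hα.trans hαn)
  set e := α - (n:ℝ) with he
  have helt : e < 0 := by simp [he]; linarith
  have hy0 : volume ({y} : Set (Rn n)) = 0 := vol_singleton hn y
  have hae : ∀ᵐ z : Rn n, z ≠ y := by
    rw [ae_iff]
    simpa [not_not, Set.setOf_eq_eq_singleton] using hy0
  show _ ≤ ENNReal.ofReal (rieszConst n α) * ∫⁻ z, ENNReal.ofReal (‖y - z‖ ^ e) * f z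
  rw [mul_comm (ENNReal.ofReal ((2:ℝ) ^ e)), mul_assoc]
  refine mul_le_mul_right ?_ _
  calc ENNReal.ofReal ((2:ℝ) ^ e) *
        ∫⁻ z in (Metric.ball x (dist x y))ᶜ, ENNReal.ofReal (‖x - z‖ ^ e) * f z
      = ∫⁻ z in (Metric.ball x (dist x y))ᶜ,
          ENNReal.ofReal ((2:ℝ) ^ e) * (ENNReal.ofReal (‖x - z‖ ^ e) * f z) :=
        (lintegral_const_mul' _ _ ofReal_ne_top).symm
    _ ≤ ∫⁻ z in (Metric.ball x (dist x y))ᶜ, ENNReal.ofReal (‖y - z‖ ^ e) * f z := by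
        refine setLIntegral_mono_ae ((meas_kern e y).mul hf).aemeasurable ?_
        filter_upwards [hae] with z hzy hz
        have hdz : dist x y ≤ dist z x := by
          simpa only [Set.mem_compl_iff, Metric.mem_ball, not_lt] using hz
        rw [← mul_assoc, ← ENNReal.ofReal_mul (Real.rpow_nonneg (by norm_num) e)]
        refine mul_le_mul_left (ENNReal.ofReal_le_ofReal ?_) _
        rcases eq_or_lt_of_le (norm_nonneg (x - z)) with h0 | h0
        · rw [← h0, Real.zero_rpow (ne_of_lt helt), mul_zero]
          exact Real.rpow_nonneg (norm_nonneg _) e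
        · have h1 : ‖y - z‖ ≤ 2 * ‖x - z‖ := by
            have htri : dist y z ≤ dist y x + dist x z := dist_triangle y x z
            have hxy : dist y x ≤ dist x z := by
              rw [dist_comm y x]
              calc dist x y ≤ dist z x := hdz
                _ = dist x z := dist_comm z x
            calc ‖y - z‖ = dist y z := (dist_eq_norm y z).symm
              _ ≤ dist y x + dist x z := htri
              _ ≤ dist x z + dist x z := add_le_add_left hxy _
              _ = 2 * ‖x - z‖ := by rw [dist_eq_norm]; ring
          have h2 : (0:ℝ) < ‖y - z‖ := by
            rw [norm_pos_iff, sub_ne_zero]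
            exact hzy.symm
          calc (2:ℝ) ^ e * ‖x - z‖ ^ e = (2 * ‖x - z‖) ^ e :=
                (Real.mul_rpow (by norm_num) (norm_nonneg _)).symm
            _ ≤ ‖y - z‖ ^ e := Real.rpow_le_rpow_of_nonpos h2 h1 helt.le
    _ ≤ ∫⁻ z, ENNReal.ofReal (‖y - z‖ ^ e) * f z := setLIntegral_le_lintegral _ _

end aux0

/-- For t ≥ 1 and any nonnegative measurable f on ℝⁿ, (I_α f)^t ≤ A · I_α[f·(I_α f)^{t-1}]
everywhere, with A depending only on n, α, t. -/
theorem stmt0 (n : ℕ) (α t : ℝ) (hα : 0 < α) (hαn : α < n) (ht : 1 ≤ t) :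
    ∃ A : ℝ≥0∞, A ≠ ⊤ ∧ ∀ f : Rn n → ℝ≥0∞, Measurable f → ∀ x : Rn n,
      rieszPotential n α f x ^ t ≤
        A * rieszPotential n α (fun y => f y * rieszPotential n α f y ^ (t - 1)) x := by
  have hn : 0 < n := Nat.cast_pos.mp (hα.trans hαn)
  set e := α - (n:ℝ) with he
  have helt : e < 0 := by simp [he]; linarith
  have ht0 : (0:ℝ) ≤ t - 1 := by linarith
  have htpos : (0:ℝ) < t := by linarith
  set c' : ℝ≥0∞ := ENNReal.ofReal ((2:ℝ) ^ e) with hc'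
  have hc'0 : c' ≠ 0 := by
    rw [hc']
    simp only [ne_eq, ENNReal.ofReal_eq_zero, not_le]
    exact Real.rpow_pos_of_pos (by norm_num) e
  have hc't : c' ≠ ⊤ := ofReal_ne_top
  have hpow0 : c' ^ (t - 1) ≠ 0 := by
    simp only [ne_eq, ENNReal.rpow_eq_zero_iff, not_or, not_and, not_lt]
    exact ⟨fun h => absurd h hc'0, fun h => absurd h hc't⟩
  have hpowt : c' ^ (t - 1) ≠ ⊤ := ENNReal.rpow_ne_top_of_nonneg ht0 hc't
  set A : ℝ≥0∞ := (2:ℝ≥0∞) ^ t / c' ^ (t - 1) with hAdef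
  have h2t0 : ((2:ℝ≥0∞) ^ t) ≠ 0 := by
    simp only [ne_eq, ENNReal.rpow_eq_zero_iff, not_or, not_and, not_lt]
    constructor
    · intro h; exact absurd h two_ne_zero
    · intro h; exact absurd h ENNReal.ofNat_ne_top
  have h2tt : ((2:ℝ≥0∞) ^ t) ≠ ⊤ := ENNReal.rpow_ne_top_of_nonneg htpos.le ENNReal.ofNat_ne_top
  have hAne : A ≠ ⊤ := by
    rw [hAdef]
    simp only [ne_eq, ENNReal.div_eq_top, not_or, not_and]
    exact ⟨fun _ => hpow0, fun h => absurd h h2tt⟩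
  have hA0 : A ≠ 0 := (ENNReal.div_pos h2t0 hpowt).ne'
  have hAc : A * c' ^ (t - 1) = (2:ℝ≥0∞) ^ t := ENNReal.div_mul_cancel hpow0 hpowt
  refine ⟨A, hAne, ?_⟩
  intro f hf x
  have hγpos := rieszConst_pos hα hαn
  set γ' : ℝ≥0∞ := ENNReal.ofReal (rieszConst n α) with hγ'
  have hγ'0 : γ' ≠ 0 := by
    rw [hγ']; simp only [ne_eq, ENNReal.ofReal_eq_zero, not_le]; exact hγpos
  have hγ't : γ' ≠ ⊤ := ofReal_ne_top
  set u := rieszPotential n α f with hu_def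
  have hu : Measurable u := riesz_measurable hf
  set g : Rn n → ℝ≥0∞ := fun z => ENNReal.ofReal (‖x - z‖ ^ e) * f z with hg
  have hgm : Measurable g := (meas_kern e x).mul hf
  set μ : Measure (Rn n) := volume.withDensity g with hμ
  have hμs : ∀ s : Set (Rn n), MeasurableSet s → μ s = ∫⁻ z in s, g z := fun s hs =>
    withDensity_apply g hs
  set I : ℝ≥0∞ := ∫⁻ z, g z with hIdef
  have hμuniv : μ Set.univ = I := by
    rw [hμs _ MeasurableSet.univ, Measure.restrict_univ]
  have hLHS : u x = γ' * I := rfl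
  set Itot : ℝ≥0∞ := ∫⁻ y, ENNReal.ofReal (‖x - y‖ ^ e) * (f y * u y ^ (t - 1))
    with hItotdef
  have hRHS : rieszPotential n α (fun y => f y * u y ^ (t - 1)) x = γ' * Itot := rfl
  rw [hLHS, hRHS]
  have hbig : Measurable fun y => ENNReal.ofReal (‖x - y‖ ^ e) * (f y * u y ^ (t - 1)) := by
    have hmono : Monotone fun a : ℝ≥0∞ => a ^ (t - 1) :=
      fun a b hab => ENNReal.rpow_le_rpow hab ht0
    exact (meas_kern e x).mul (hf.mul (hmono.measurable.comp hu))
  have hkey : ∀ y : Rn n, c' * γ' * μ ((Metric.ball x (dist x y))ᶜ) ≤ u y := by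
    intro y
    rw [hμs _ measurableSet_ball.compl]
    exact keyA hα hαn hf x y
  rcases eq_or_ne I 0 with hI0 | hI0
  · rw [hI0, mul_zero, ENNReal.zero_rpow_of_pos htpos]
    exact zero_le
  rcases eq_or_ne I ⊤ with hItop | hItop
  · -- infinite case
    have hItot_top : Itot = ⊤ := by
      rcases eq_or_lt_of_le ht with h1 | h1
      · rw [hItotdef]
        have : ∀ y, ENNReal.ofReal (‖x - y‖ ^ e) * (f y * u y ^ (t - 1)) = g y := by
          intro y
          rw [← h1]
          simp [hg]
        simp only [this]
        rw [← hIdef, hItop]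
      · have htm1 : (0:ℝ) < t - 1 := by linarith
        by_cases hb : ∃ R : ℝ, 0 < R ∧ μ (Metric.ball x R) = ⊤
        · obtain ⟨R, hR0, hRtop⟩ := hb
          have hsupp : 0 < volume (Function.support g) := by
            have h0I : 0 < ∫⁻ z, g z := by rw [← hIdef, hItop]; exact ENNReal.zero_lt_top
            exact (lintegral_pos_iff_support hgm).mp h0I
          have hsub : Function.support g ⊆ Function.support f := by
            intro z hz
            simp only [Function.mem_support, hg] at hz ⊢
            intro h0
            rw [h0, mul_zero] at hz
            exact hz rfl
          have hsupf : 0 < volume (Function.support f) :=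
            hsupp.trans_le (measure_mono hsub)
          have hcover : Function.support f ⊆
              ⋃ p : ℕ × ℕ, ({z | ((p.1 : ℝ≥0∞))⁻¹ ≤ f z} ∩ Metric.closedBall x p.2) := by
            intro z hz
            obtain ⟨j, hj⟩ := ENNReal.exists_inv_nat_lt (Function.mem_support.mp hz)
            obtain ⟨m, hm⟩ := exists_nat_ge (dist z x)
            exact Set.mem_iUnion.mpr ⟨(j, m), hj.le, Metric.mem_closedBall.mpr hm⟩
          have hex : ∃ p : ℕ × ℕ,
              0 < volume ({z | ((p.1 : ℝ≥0∞))⁻¹ ≤ f z} ∩ Metric.closedBall x p.2) := by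
            by_contra hcon
            push_neg at hcon
            simp only [le_zero_iff] at hcon
            exact hsupf.ne' (measure_mono_null hcover (measure_iUnion_null hcon))
          obtain ⟨⟨j, m⟩, hT⟩ := hex
          set T : Set (Rn n) := {z | ((j : ℝ≥0∞))⁻¹ ≤ f z} ∩ Metric.closedBall x m with hTdef
          set ε : ℝ≥0∞ := ((j : ℝ≥0∞))⁻¹ with hεdef
          have hε0 : ε ≠ 0 := by
            rw [hεdef, ne_eq, ENNReal.inv_eq_zero]
            exact ENNReal.natCast_ne_top j
          set D : ℝ := R + m with hDdef
          have hD0 : 0 < D := by positivity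
          set m0 : ℝ≥0∞ := γ' * (ENNReal.ofReal (D ^ e) * (ε * volume T)) with hm0def
          have hm00 : m0 ≠ 0 := by
            rw [hm0def]
            refine mul_ne_zero hγ'0 (mul_ne_zero ?_ (mul_ne_zero hε0 hT.ne'))
            simp only [ne_eq, ENNReal.ofReal_eq_zero, not_le]
            exact Real.rpow_pos_of_pos hD0 e
          have hmb : ∀ y ∈ Metric.ball x R, m0 ≤ u y := by
            intro y hy
            show m0 ≤ γ' * ∫⁻ z, ENNReal.ofReal (‖y - z‖ ^ e) * f z
            rw [hm0def]
            refine mul_le_mul_right ?_ _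
            calc ENNReal.ofReal (D ^ e) * (ε * volume T)
                = ∫⁻ _ in T, ENNReal.ofReal (D ^ e) * ε := by
                  rw [setLIntegral_const, mul_assoc]
              _ ≤ ∫⁻ z in T, ENNReal.ofReal (‖y - z‖ ^ e) * f z := by
                  refine setLIntegral_mono_ae ((meas_kern e y).mul hf).aemeasurable ?_
                  have hae : ∀ᵐ z : Rn n, z ≠ y := by
                    rw [ae_iff]
                    simpa [not_not, Set.setOf_eq_eq_singleton] using vol_singleton hn y
                  filter_upwards [hae] with z hzy hzT
                  obtain ⟨hzf, hzb⟩ := hzT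
                  refine mul_le_mul' (ENNReal.ofReal_le_ofReal ?_) hzf
                  have hyz0 : (0:ℝ) < ‖y - z‖ := by
                    rw [norm_pos_iff, sub_ne_zero]; exact hzy.symm
                  have hyzD : ‖y - z‖ ≤ D := by
                    have h1 : dist y x < R := Metric.mem_ball.mp hy
                    have h2 : dist z x ≤ m := Metric.mem_closedBall.mp hzb
                    calc ‖y - z‖ = dist y z := (dist_eq_norm _ _).symm
                      _ ≤ dist y x + dist x z := dist_triangle y x z
                      _ = dist y x + dist z x := by rw [dist_comm x z]
                      _ ≤ R + m := add_le_add h1.le h2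
                  exact Real.rpow_le_rpow_of_nonpos hyz0 hyzD helt.le
              _ ≤ ∫⁻ z, ENNReal.ofReal (‖y - z‖ ^ e) * f z :=
                  setLIntegral_le_lintegral _ _
          have hb1 : μ (Metric.ball x R) * m0 ^ (t - 1) ≤ Itot := by
            calc μ (Metric.ball x R) * m0 ^ (t - 1)
                = (∫⁻ y in Metric.ball x R, g y) * m0 ^ (t - 1) := by
                  rw [hμs _ measurableSet_ball]
              _ = ∫⁻ y in Metric.ball x R, g y * m0 ^ (t - 1) :=
                  (lintegral_mul_const _ hgm).symm
              _ ≤ ∫⁻ y in Metric.ball x R,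
                    ENNReal.ofReal (‖x - y‖ ^ e) * (f y * u y ^ (t - 1)) := by
                  refine setLIntegral_mono hbig fun y hy => ?_
                  calc g y * m0 ^ (t - 1)
                      ≤ g y * u y ^ (t - 1) :=
                        mul_le_mul_right (ENNReal.rpow_le_rpow (hmb y hy) ht0) _
                    _ = ENNReal.ofReal (‖x - y‖ ^ e) * (f y * u y ^ (t - 1)) := by
                        rw [hg]; ring
              _ ≤ Itot := setLIntegral_le_lintegral _ _
          refine top_le_iff.mp (le_trans (le_of_eq ?_) hb1)
          rw [hRtop, ENNReal.top_mul]
          simp only [ne_eq, ENNReal.rpow_eq_zero_iff, not_or, not_and, not_lt]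
          exact ⟨fun h => absurd h hm00, fun _ => htm1.le.trans (le_refl _) |>.trans (by linarith)⟩
        · push_neg at hb
          have hGtop : ∀ R : ℝ, 0 < R → μ ((Metric.ball x R)ᶜ) = ⊤ := by
            intro R hR
            have hsum : μ (Metric.ball x R) + μ ((Metric.ball x R)ᶜ) = ⊤ := by
              rw [measure_add_measure_compl measurableSet_ball, hμuniv, hItop]
            rcases ENNReal.add_eq_top.mp hsum with h | h
            · exact absurd h (hb R hR)
            · exact h
          have hutop : ∀ y : Rn n, y ≠ x → u y = ⊤ := by
            intro y hyx
            have hd : 0 < dist x y := dist_pos.mpr (Ne.symm hyx)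
            have h1 := hkey y
            rw [hGtop _ hd, ENNReal.mul_top (mul_ne_zero hc'0 hγ'0)] at h1
            exact top_le_iff.mp h1
          have h1 : μ ({x}ᶜ : Set (Rn n)) = ⊤ := by
            refine top_le_iff.mp ?_
            rw [← hGtop 1 one_pos]
            refine measure_mono (compl_subset_compl.mpr ?_)
            intro z hz
            simp only [mem_singleton_iff] at hz
            simp [hz, Metric.mem_ball]
          refine top_le_iff.mp ?_
          calc (⊤:ℝ≥0∞) = μ ({x}ᶜ : Set (Rn n)) := h1.symm
            _ = ∫⁻ y in {x}ᶜ, g y := hμs _ (measurableSet_singleton x).compl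
            _ ≤ ∫⁻ y in {x}ᶜ,
                  ENNReal.ofReal (‖x - y‖ ^ e) * (f y * u y ^ (t - 1)) := by
                refine setLIntegral_mono hbig fun y hy => ?_
                have hy1 : (1:ℝ≥0∞) ≤ u y ^ (t - 1) := by
                  rw [hutop y (by simpa using hy), ENNReal.top_rpow_of_pos htm1]
                  exact le_top
                calc g y = ENNReal.ofReal (‖x - y‖ ^ e) * (f y * 1) := by
                      rw [hg]; ring
                  _ ≤ ENNReal.ofReal (‖x - y‖ ^ e) * (f y * u y ^ (t - 1)) :=
                      mul_le_mul_right (mul_le_mul_right hy1 _) _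
            _ ≤ Itot := setLIntegral_le_lintegral _ _
    rw [hItot_top, ENNReal.mul_top hγ'0, ENNReal.mul_top hA0]
    exact le_top
  -- main case : 0 < I < ∞
  have hI20 : I / 2 ≠ 0 := by
    simp only [ne_eq, ENNReal.div_eq_zero_iff, not_or]
    exact ⟨hI0, ENNReal.ofNat_ne_top⟩
  have hI2t : I / 2 ≠ ⊤ := ne_top_of_le_ne_top hItop ENNReal.half_le_self
  have hμfin : ∀ s : Set (Rn n), μ s ≠ ⊤ := fun s =>
    ne_top_of_le_ne_top hItop (hμuniv ▸ measure_mono (subset_univ s))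
  have hsmall : ∃ r : ℝ, 0 < r ∧ μ (Metric.ball x r) ≤ I / 2 := by
    have hanti : Antitone fun k : ℕ => Metric.ball x (1 / (k + 1 : ℝ)) := by
      intro a b hab
      apply Metric.ball_subset_ball
      have : (a:ℝ) + 1 ≤ (b:ℝ) + 1 := by exact_mod_cast Nat.succ_le_succ hab
      exact one_div_le_one_div_of_le (by positivity) this
    have htd := tendsto_measure_iInter_atTop (μ := μ)
      (fun k => measurableSet_ball.nullMeasurableSet) hanti ⟨0, hμfin _⟩
    have hint : (⋂ k : ℕ, Metric.ball x (1 / (k + 1 : ℝ))) = {x} := by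
      ext z
      simp only [mem_iInter, Metric.mem_ball, mem_singleton_iff]
      constructor
      · intro h
        by_contra hzx
        obtain ⟨k, hk⟩ := exists_nat_one_div_lt (dist_pos.mpr hzx)
        exact absurd (h k) (not_lt.mpr hk.le)
      · intro h k
        rw [h, dist_self]
        positivity
    have hx0 : μ ({x} : Set (Rn n)) = 0 :=
      (withDensity_absolutelyContinuous volume g) (vol_singleton hn x)
    rw [hint, hx0] at htd
    obtain ⟨k, hk⟩ := (htd.eventually_lt_const (zero_lt_iff.mpr hI20)).exists
    exact ⟨1 / (k + 1 : ℝ), by positivity, hk.le⟩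
  obtain ⟨r₁, hr₁0, hr₁⟩ := hsmall
  have hlarge : ∃ R : ℝ, 0 < R ∧ I / 2 < μ (Metric.ball x R) := by
    have hmono : Monotone fun k : ℕ => Metric.ball x (k : ℝ) := fun a b hab =>
      Metric.ball_subset_ball (by exact_mod_cast hab)
    have htd := tendsto_measure_iUnion_atTop (μ := μ) hmono
    have hun : (⋃ k : ℕ, Metric.ball x (k : ℝ)) = univ := Metric.iUnion_ball_nat x
    rw [hun, hμuniv] at htd
    obtain ⟨k, hk⟩ := (htd.eventually_const_lt (ENNReal.half_lt_self hI0 hItop)).exists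
    exact ⟨(k:ℝ) + 1, by positivity,
      hk.trans_le (measure_mono (Metric.ball_subset_ball (by linarith)))⟩
  obtain ⟨R, hR0, hR⟩ := hlarge
  set S : Set ℝ := {r | 0 < r ∧ μ (Metric.ball x r) ≤ I / 2} with hSdef
  have hr₁S : r₁ ∈ S := ⟨hr₁0, hr₁⟩
  have hbdd : BddAbove S := by
    refine ⟨R, fun r hr => ?_⟩
    by_contra hlt
    push_neg at hlt
    exact absurd (le_trans (measure_mono (Metric.ball_subset_ball hlt.le)) hr.2)
      (not_le.mpr hR)
  set r₀ : ℝ := sSup S with hr₀def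
  have hr₀0 : 0 < r₀ := lt_of_lt_of_le hr₁0 (le_csSup hbdd hr₁S)
  have hlt_mem : ∀ r : ℝ, r < r₀ → μ (Metric.ball x r) ≤ I / 2 := by
    intro r hr
    obtain ⟨s, hsS, hrs⟩ := exists_lt_of_lt_csSup ⟨r₁, hr₁S⟩ hr
    exact le_trans (measure_mono (Metric.ball_subset_ball hrs.le)) hsS.2
  have hgt : ∀ r : ℝ, r₀ < r → I / 2 < μ (Metric.ball x r) := by
    intro r hr
    by_contra hcon
    push_neg at hcon
    exact absurd (le_csSup hbdd ⟨hr₀0.trans hr, hcon⟩) (not_le.mpr hr)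
  have hFle : μ (Metric.ball x r₀) ≤ I / 2 := by
    have hmono : Monotone fun k : ℕ => Metric.ball x (r₀ - r₀ / (k + 2 : ℝ)) := by
      intro a b hab
      apply Metric.ball_subset_ball
      have h1 : r₀ / (b + 2 : ℝ) ≤ r₀ / (a + 2 : ℝ) := by
        gcongr <;> exact_mod_cast hab
      linarith
    have hU : Metric.ball x r₀ = ⋃ k : ℕ, Metric.ball x (r₀ - r₀ / (k + 2 : ℝ)) := by
      ext z
      simp only [mem_iUnion, Metric.mem_ball]
      constructor
      · intro h
        have hd : 0 < r₀ - dist z x := by linarith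
        obtain ⟨k, hk⟩ := exists_nat_gt (r₀ / (r₀ - dist z x))
        refine ⟨k, ?_⟩
        have h2 : r₀ / (r₀ - dist z x) < (k:ℝ) + 2 := by linarith
        have h3 : r₀ < ((k:ℝ) + 2) * (r₀ - dist z x) := by
          rwa [div_lt_iff₀ hd] at h2
        have h4 : r₀ / ((k:ℝ) + 2) < r₀ - dist z x := by
          rw [div_lt_iff₀ (by positivity)]
          calc r₀ < ((k:ℝ) + 2) * (r₀ - dist z x) := h3
            _ = (r₀ - dist z x) * ((k:ℝ) + 2) := mul_comm _ _
        linarith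
      · rintro ⟨k, hk⟩
        have : 0 ≤ r₀ / (k + 2 : ℝ) := by positivity
        linarith
    rw [hU, hmono.measure_iUnion]
    refine iSup_le fun k => ?_
    have h5 : 0 < r₀ / (k + 2 : ℝ) := by positivity
    exact hlt_mem _ (by linarith)
  have hFge : I / 2 ≤ μ (Metric.ball x r₀) := by
    have hsph : μ (Metric.sphere x r₀) = 0 := by
      haveI := nontrivial_Rn hn
      exact (withDensity_absolutelyContinuous volume g)
        (Measure.addHaar_sphere volume x r₀)
    have hanti : Antitone fun k : ℕ => Metric.ball x (r₀ + 1 / (k + 1 : ℝ)) := by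
      intro a b hab
      apply Metric.ball_subset_ball
      have : (a:ℝ) + 1 ≤ (b:ℝ) + 1 := by exact_mod_cast Nat.succ_le_succ hab
      have h2 := one_div_le_one_div_of_le (show (0:ℝ) < a + 1 by positivity) this
      linarith
    have hint : (⋂ k : ℕ, Metric.ball x (r₀ + 1 / (k + 1 : ℝ))) =
        Metric.closedBall x r₀ := by
      ext z
      simp only [mem_iInter, Metric.mem_ball, Metric.mem_closedBall]
      constructor
      · intro h
        by_contra hcon
        push_neg at hcon
        obtain ⟨k, hk⟩ := exists_nat_one_div_lt (show 0 < dist z x - r₀ by linarith)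
        exact absurd (h k) (not_lt.mpr (by linarith))
      · intro h k
        have : 0 < 1 / (k + 1 : ℝ) := by positivity
        linarith
    have htd := tendsto_measure_iInter_atTop (μ := μ)
      (fun k => measurableSet_ball.nullMeasurableSet) hanti ⟨0, hμfin _⟩
    rw [hint] at htd
    have hcb : μ (Metric.closedBall x r₀) ≤ μ (Metric.ball x r₀) := by
      calc μ (Metric.closedBall x r₀)
          ≤ μ (Metric.ball x r₀ ∪ Metric.sphere x r₀) := by
            refine measure_mono fun z hz => ?_
            rcases lt_or_eq_of_le (Metric.mem_closedBall.mp hz) with h | h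
            · exact Or.inl (Metric.mem_ball.mpr h)
            · exact Or.inr (Metric.mem_sphere.mpr h)
        _ ≤ μ (Metric.ball x r₀) + μ (Metric.sphere x r₀) := measure_union_le _ _
        _ = μ (Metric.ball x r₀) := by rw [hsph, add_zero]
    refine le_trans (ge_of_tendsto htd ?_) hcb
    refine Filter.Eventually.of_forall fun k => ?_
    have h6 : 0 < 1 / (k + 1 : ℝ) := by positivity
    exact (hgt _ (by linarith)).le
  have hGge : I / 2 ≤ μ ((Metric.ball x r₀)ᶜ) := by
    have hsum : μ (Metric.ball x r₀) + μ ((Metric.ball x r₀)ᶜ) = I := by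
      rw [measure_add_measure_compl measurableSet_ball, hμuniv]
    have h2 : I ≤ I / 2 + μ ((Metric.ball x r₀)ᶜ) := by
      calc I = μ (Metric.ball x r₀) + μ ((Metric.ball x r₀)ᶜ) := hsum.symm
        _ ≤ I / 2 + μ ((Metric.ball x r₀)ᶜ) := add_le_add_left hFle _
    have h3 := tsub_le_iff_left.mpr h2
    rwa [ENNReal.sub_half hItop] at h3
  have hItot_ge : μ (Metric.ball x r₀) * (c' * γ' * μ ((Metric.ball x r₀)ᶜ)) ^ (t - 1)
      ≤ Itot := by
    calc μ (Metric.ball x r₀) * (c' * γ' * μ ((Metric.ball x r₀)ᶜ)) ^ (t - 1)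
        = (∫⁻ y in Metric.ball x r₀, g y) *
            (c' * γ' * μ ((Metric.ball x r₀)ᶜ)) ^ (t - 1) := by
          rw [hμs _ measurableSet_ball]
      _ = ∫⁻ y in Metric.ball x r₀,
            g y * (c' * γ' * μ ((Metric.ball x r₀)ᶜ)) ^ (t - 1) :=
          (lintegral_mul_const _ hgm).symm
      _ ≤ ∫⁻ y in Metric.ball x r₀,
            ENNReal.ofReal (‖x - y‖ ^ e) * (f y * u y ^ (t - 1)) := by
          refine setLIntegral_mono hbig fun y hy => ?_
          have hdy : dist x y < r₀ := by
            rw [dist_comm]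
            exact Metric.mem_ball.mp hy
          have hmu : μ ((Metric.ball x r₀)ᶜ) ≤ μ ((Metric.ball x (dist x y))ᶜ) :=
            measure_mono (compl_subset_compl.mpr (Metric.ball_subset_ball hdy.le))
          have h2 : c' * γ' * μ ((Metric.ball x r₀)ᶜ) ≤ u y :=
            le_trans (mul_le_mul_right hmu _) (hkey y)
          calc g y * (c' * γ' * μ ((Metric.ball x r₀)ᶜ)) ^ (t - 1)
              ≤ g y * u y ^ (t - 1) :=
                mul_le_mul_right (ENNReal.rpow_le_rpow h2 ht0) _
            _ = ENNReal.ofReal (‖x - y‖ ^ e) * (f y * u y ^ (t - 1)) := by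
                rw [hg]; ring
      _ ≤ Itot := setLIntegral_le_lintegral _ _
  have hexp : ∀ a : ℝ≥0∞, a ≠ 0 → a ≠ ⊤ → a * a ^ (t - 1) = a ^ t := by
    intro a h0 ht'
    calc a * a ^ (t - 1) = a ^ (1:ℝ) * a ^ (t - 1) := by rw [ENNReal.rpow_one]
      _ = a ^ (1 + (t - 1)) := (ENNReal.rpow_add _ _ h0 ht').symm
      _ = a ^ t := by congr 1; ring
  calc (γ' * I) ^ t = (γ' * (2 * (I / 2))) ^ t := by
        rw [ENNReal.mul_div_cancel two_ne_zero ENNReal.ofNat_ne_top]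
    _ = γ' ^ t * ((2:ℝ≥0∞) ^ t * (I / 2) ^ t) := by
        rw [ENNReal.mul_rpow_of_nonneg _ _ htpos.le,
          ENNReal.mul_rpow_of_nonneg _ _ htpos.le]
    _ = (A * c' ^ (t - 1)) * (γ' * γ' ^ (t - 1)) * ((I / 2) * (I / 2) ^ (t - 1)) := by
        rw [hAc, hexp γ' hγ'0 hγ't, hexp _ hI20 hI2t]
        ring
    _ = A * (γ' * ((I / 2) * (c' * γ' * (I / 2)) ^ (t - 1))) := by
        rw [ENNReal.mul_rpow_of_nonneg (c' * γ') _ ht0,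
          ENNReal.mul_rpow_of_nonneg c' γ' ht0]
        ring
    _ ≤ A * (γ' * ((I / 2) * (c' * γ' * μ ((Metric.ball x r₀)ᶜ)) ^ (t - 1))) := by
        exact mul_le_mul_right (mul_le_mul_right
          (mul_le_mul_right
            (ENNReal.rpow_le_rpow (mul_le_mul_right hGge _) ht0) _) _) _
    _ ≤ A * (γ' * (μ (Metric.ball x r₀) *
          (c' * γ' * μ ((Metric.ball x r₀)ᶜ)) ^ (t - 1))) := by
        exact mul_le_mul_right (mul_le_mul_right (mul_le_mul_left hFge _) _) _
    _ ≤ A * (γ' * Itot) := mul_le_mul_right (mul_le_mul_right hItot_ge _) _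
end
end

section
/- Let s > 1 and let f₁, f₂ be nonnegative functions in L^s(ℝⁿ). For λ ∈ (0,1), set g = (λ f₁^s + (1-λ) f₂^s)^{1/s}. Then for every x ∈ ℝⁿ, (I_α g(x))^s ≥ λ (I_α f₁(x))^s + (1-λ)(I_α f₂(x))^s, where I_α denotes the Riesz potential of order α ∈ (0,n). -/
open MeasureTheory ENNReal Set Filter

noncomputable section

/-- Two-point weighted Hölder inequality in `ℝ≥0∞`. -/
lemma holder2 {s : ℝ} (hs : 1 < s) {w₁ w₂ : ℝ≥0∞} (hw₁ : w₁ ≠ 0) (hw₁' : w₁ ≠ ⊤)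
    (hw₂ : w₂ ≠ 0) (hw₂' : w₂ ≠ ⊤) (a b u v : ℝ≥0∞) :
    w₁ * (a * u) + w₂ * (b * v) ≤
      (w₁ * a ^ (s / (s - 1)) + w₂ * b ^ (s / (s - 1))) ^ (1 - 1 / s) *
        (w₁ * u ^ s + w₂ * v ^ s) ^ (1 / s) := by
  have hs0 : (0 : ℝ) < s := by linarith
  have hpq : (s / (s - 1)).HolderConjugate s := (Real.HolderConjugate.conjExponent hs).symm
  set p := s / (s - 1) with hp
  have hp0 : (0 : ℝ) < p := hpq.pos
  have key := ENNReal.inner_le_Lp_mul_Lq (s := (Finset.univ : Finset Bool))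
    (fun i => if i then w₁ ^ (1 / p) * a else w₂ ^ (1 / p) * b)
    (fun i => if i then w₁ ^ (1 / s) * u else w₂ ^ (1 / s) * v) hpq
  simp only [Fintype.sum_bool, Bool.false_eq_true, if_true, if_false] at key
  have hw : ∀ (w : ℝ≥0∞), w ≠ 0 → w ≠ ⊤ → w ^ (1 / p) * w ^ (1 / s) = w := by
    intro w h1 h2
    rw [← ENNReal.rpow_add _ _ h1 h2, one_div, one_div, hpq.inv_add_inv_eq_one, ENNReal.rpow_one]
  have hmul : ∀ (w c : ℝ≥0∞) (t : ℝ), 0 < t → (w ^ (1 / t) * c) ^ t = w * c ^ t := by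
    intro w c t ht
    rw [ENNReal.mul_rpow_of_nonneg _ _ ht.le, ← ENNReal.rpow_mul,
      one_div_mul_cancel ht.ne', ENNReal.rpow_one]
  calc w₁ * (a * u) + w₂ * (b * v)
      = (w₁ ^ (1/p) * a) * (w₁ ^ (1/s) * u) + (w₂ ^ (1/p) * b) * (w₂ ^ (1/s) * v) := by
        rw [show ∀ (w : ℝ≥0∞) (c d : ℝ≥0∞), (w ^ (1/p) * c) * (w ^ (1/s) * d)
            = (w ^ (1/p) * w ^ (1/s)) * (c * d) by intros; ring,
          show ∀ (w : ℝ≥0∞) (c d : ℝ≥0∞), (w ^ (1/p) * c) * (w ^ (1/s) * d)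
            = (w ^ (1/p) * w ^ (1/s)) * (c * d) by intros; ring,
          hw w₁ hw₁ hw₁', hw w₂ hw₂ hw₂']
    _ ≤ ((w₁ ^ (1/p) * a) ^ p + (w₂ ^ (1/p) * b) ^ p) ^ (1/p) *
          ((w₁ ^ (1/s) * u) ^ s + (w₂ ^ (1/s) * v) ^ s) ^ (1/s) := key
    _ = (w₁ * a ^ p + w₂ * b ^ p) ^ (1 - 1/s) * (w₁ * u ^ s + w₂ * v ^ s) ^ (1/s) := by
        rw [hmul w₁ a p hp0, hmul w₂ b p hp0, hmul w₁ u s hs0, hmul w₂ v s hs0,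
          show (1 : ℝ)/p = 1 - 1/s by rw [hp]; field_simp]

/-- reverse Minkowski for Riesz potentials: for g = (λ f₁^s + (1-λ) f₂^s)^{1/s},
(I_α g(x))^s ≥ λ (I_α f₁(x))^s + (1-λ)(I_α f₂(x))^s. -/
theorem stmt1 (n : ℕ) (α s : ℝ) (hα : 0 < α) (hαn : α < n) (hs : 1 < s)
    (f₁ f₂ : Rn n → ℝ≥0∞) (hf₁ : Measurable f₁) (hf₂ : Measurable f₂)
    (hf₁L : (∫⁻ y, f₁ y ^ s) < ⊤) (hf₂L : (∫⁻ y, f₂ y ^ s) < ⊤)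
    (l : ℝ) (hl : l ∈ Set.Ioo (0 : ℝ) 1) (x : Rn n) :
    ENNReal.ofReal l * rieszPotential n α f₁ x ^ s +
        ENNReal.ofReal (1 - l) * rieszPotential n α f₂ x ^ s ≤
      rieszPotential n α
        (fun y => (ENNReal.ofReal l * f₁ y ^ s + ENNReal.ofReal (1 - l) * f₂ y ^ s) ^ (1 / s))
        x ^ s := by
  obtain ⟨hl0, hl1⟩ := hl
  have hs0 : (0 : ℝ) < s := by linarith
  set w₁ : ℝ≥0∞ := ENNReal.ofReal l with hw₁def
  set w₂ : ℝ≥0∞ := ENNReal.ofReal (1 - l) with hw₂def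
  have hw₁ : w₁ ≠ 0 := by simp [hw₁def, hl0]
  have hw₁' : w₁ ≠ ⊤ := ENNReal.ofReal_ne_top
  have hw₂ : w₂ ≠ 0 := by simp [hw₂def]; linarith
  have hw₂' : w₂ ≠ ⊤ := ENNReal.ofReal_ne_top
  set k : Rn n → ℝ≥0∞ := fun y => ENNReal.ofReal (‖x - y‖ ^ (α - (n : ℝ))) with hkdef
  set g : Rn n → ℝ≥0∞ := fun y => (w₁ * f₁ y ^ s + w₂ * f₂ y ^ s) ^ (1 / s) with hgdef
  set A : ℝ≥0∞ := ∫⁻ y, k y * f₁ y with hAdef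
  set B : ℝ≥0∞ := ∫⁻ y, k y * f₂ y with hBdef
  set G : ℝ≥0∞ := ∫⁻ y, k y * g y with hGdef
  set c : ℝ≥0∞ := ENNReal.ofReal (rieszConst n α) with hcdef
  -- reduce to the inequality without the constant c
  have hred : rieszPotential n α f₁ x = c * A := rfl
  have hred2 : rieszPotential n α f₂ x = c * B := rfl
  have hred3 : rieszPotential n α
      (fun y => (ENNReal.ofReal l * f₁ y ^ s + ENNReal.ofReal (1 - l) * f₂ y ^ s) ^ (1 / s)) x
      = c * G := rfl
  rw [hred, hred2, hred3, ENNReal.mul_rpow_of_nonneg _ _ hs0.le,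
    ENNReal.mul_rpow_of_nonneg _ _ hs0.le, ENNReal.mul_rpow_of_nonneg _ _ hs0.le,
    mul_comm w₁ _, mul_comm w₂ _, mul_assoc, mul_assoc, ← mul_add]
  refine mul_le_mul_right ?_ _
  rw [mul_comm (A ^ s) w₁, mul_comm (B ^ s) w₂]
  -- key inequality: w₁ * A^s + w₂ * B^s ≤ G^s
  -- pointwise lower bounds for g
  have hg1 : ∀ y, w₁ ^ (1/s) * f₁ y ≤ g y := by
    intro y
    have : w₁ * f₁ y ^ s ≤ w₁ * f₁ y ^ s + w₂ * f₂ y ^ s := le_self_add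
    calc w₁ ^ (1/s) * f₁ y = (w₁ * f₁ y ^ s) ^ (1/s) := by
          rw [ENNReal.mul_rpow_of_nonneg _ _ (by positivity), ← ENNReal.rpow_mul,
            mul_one_div_cancel hs0.ne', ENNReal.rpow_one]
      _ ≤ g y := ENNReal.rpow_le_rpow this (by positivity)
  have hg2 : ∀ y, w₂ ^ (1/s) * f₂ y ≤ g y := by
    intro y
    have : w₂ * f₂ y ^ s ≤ w₁ * f₁ y ^ s + w₂ * f₂ y ^ s := le_add_self
    calc w₂ ^ (1/s) * f₂ y = (w₂ * f₂ y ^ s) ^ (1/s) := by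
          rw [ENNReal.mul_rpow_of_nonneg _ _ (by positivity), ← ENNReal.rpow_mul,
            mul_one_div_cancel hs0.ne', ENNReal.rpow_one]
      _ ≤ g y := ENNReal.rpow_le_rpow this (by positivity)
  -- if A or B is infinite, G is infinite
  by_cases hA : A = ⊤
  · have : (⊤ : ℝ≥0∞) ≤ G := by
      calc (⊤ : ℝ≥0∞) = w₁ ^ (1/s) * A := by
            rw [hA, ENNReal.mul_top]
            simp [ENNReal.rpow_eq_zero_iff, hw₁, hw₁']
        _ = ∫⁻ y, w₁ ^ (1/s) * (k y * f₁ y) := (lintegral_const_mul' _ _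
            (ENNReal.rpow_ne_top_of_nonneg (by positivity) hw₁')).symm
        _ ≤ G := lintegral_mono fun y => by
            rw [show w₁ ^ (1/s) * (k y * f₁ y) = k y * (w₁ ^ (1/s) * f₁ y) by ring]
            exact mul_le_mul_right (hg1 y) _
    rw [top_le_iff.mp this, ENNReal.top_rpow_of_pos hs0]
    exact le_top
  by_cases hB : B = ⊤
  · have : (⊤ : ℝ≥0∞) ≤ G := by
      calc (⊤ : ℝ≥0∞) = w₂ ^ (1/s) * B := by
            rw [hB, ENNReal.mul_top]
            simp [ENNReal.rpow_eq_zero_iff, hw₂, hw₂']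
        _ = ∫⁻ y, w₂ ^ (1/s) * (k y * f₂ y) := (lintegral_const_mul' _ _
            (ENNReal.rpow_ne_top_of_nonneg (by positivity) hw₂')).symm
        _ ≤ G := lintegral_mono fun y => by
            rw [show w₂ ^ (1/s) * (k y * f₂ y) = k y * (w₂ ^ (1/s) * f₂ y) by ring]
            exact mul_le_mul_right (hg2 y) _
    rw [top_le_iff.mp this, ENNReal.top_rpow_of_pos hs0]
    exact le_top
  -- main case: A, B finite
  set T : ℝ≥0∞ := w₁ * A ^ s + w₂ * B ^ s with hTdef
  by_cases hT0 : T = 0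
  · rw [hT0]; exact zero_le
  have hT' : T ≠ ⊤ := by
    rw [hTdef]
    exact ENNReal.add_ne_top.mpr
      ⟨ENNReal.mul_ne_top hw₁' (ENNReal.rpow_ne_top_of_nonneg hs0.le hA),
       ENNReal.mul_ne_top hw₂' (ENNReal.rpow_ne_top_of_nonneg hs0.le hB)⟩
  -- pointwise Hölder
  have hpt : ∀ y, w₁ * (A ^ (s - 1) * (k y * f₁ y)) + w₂ * (B ^ (s - 1) * (k y * f₂ y)) ≤
      T ^ (1 - 1/s) * (k y * g y) := by
    intro y
    have h := holder2 hs hw₁ hw₁' hw₂ hw₂' (A ^ (s - 1)) (B ^ (s - 1)) (k y * f₁ y) (k y * f₂ y)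
    have he : ∀ C : ℝ≥0∞, (C ^ (s - 1)) ^ (s / (s - 1)) = C ^ s := by
      intro C
      rw [← ENNReal.rpow_mul]
      congr 1
      have h1 : s - 1 ≠ 0 := by linarith
      field_simp
    rw [he A, he B] at h
    refine h.trans (le_of_eq ?_)
    congr 1
    -- (w₁ * (k f₁)^s + w₂ * (k f₂)^s)^(1/s) = k * g
    rw [ENNReal.mul_rpow_of_nonneg (k y) (f₁ y) hs0.le,
      ENNReal.mul_rpow_of_nonneg (k y) (f₂ y) hs0.le,
      show w₁ * (k y ^ s * f₁ y ^ s) + w₂ * (k y ^ s * f₂ y ^ s)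
        = k y ^ s * (w₁ * f₁ y ^ s + w₂ * f₂ y ^ s) by ring,
      ENNReal.mul_rpow_of_nonneg _ _ (by positivity : (0:ℝ) ≤ 1/s),
      ← ENNReal.rpow_mul, mul_one_div_cancel hs0.ne', ENNReal.rpow_one]
  -- integrate
  have hAs : A ^ (s - 1) ≠ ⊤ := ENNReal.rpow_ne_top_of_nonneg (by linarith) hA
  have hBs : B ^ (s - 1) ≠ ⊤ := ENNReal.rpow_ne_top_of_nonneg (by linarith) hB
  have hconst : ∀ C : ℝ≥0∞, C ≠ ⊤ → C ^ (s - 1) * C = C ^ s := by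
    intro C hC
    rcases eq_or_ne C 0 with rfl | h0
    · simp [ENNReal.zero_rpow_of_pos hs0]
    · rw [show C ^ s = C ^ ((s - 1) + 1) by rw [sub_add_cancel],
        ENNReal.rpow_add _ _ h0 hC, ENNReal.rpow_one]
  have hTint : T ≤ T ^ (1 - 1/s) * G := by
    have step : (∫⁻ y, (w₁ * A ^ (s - 1)) * (k y * f₁ y) + (w₂ * B ^ (s - 1)) * (k y * f₂ y))
        ≤ ∫⁻ y, T ^ (1 - 1/s) * (k y * g y) := by
      refine lintegral_mono fun y => ?_
      rw [mul_assoc, mul_assoc]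
      exact hpt y
    have hkf₁ : AEMeasurable (fun y => k y * f₁ y) := by
      exact (((measurable_const.sub measurable_id).norm.pow_const _).ennreal_ofReal.mul
        hf₁).aemeasurable
    rw [lintegral_add_left' (hkf₁.const_mul _),
      lintegral_const_mul' _ _ (ENNReal.mul_ne_top hw₁' hAs),
      lintegral_const_mul' _ _ (ENNReal.mul_ne_top hw₂' hBs),
      lintegral_const_mul' _ _ (ENNReal.rpow_ne_top_of_nonneg
        (by
          have : 1/s < 1 := by
            rw [div_lt_one hs0]; linarith
          linarith) hT')] at step
    calc T = (w₁ * A ^ (s - 1)) * A + (w₂ * B ^ (s - 1)) * B := by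
          rw [mul_assoc, mul_assoc, hconst A hA, hconst B hB]
      _ ≤ T ^ (1 - 1/s) * G := step
  -- conclude
  have hexp : (0:ℝ) < 1 - 1/s := by
    have : 1/s < 1 := by rw [div_lt_one hs0]; linarith
    linarith
  have hTe0 : T ^ (1 - 1/s) ≠ 0 := by
    simp [ENNReal.rpow_eq_zero_iff, hT0, hT', hexp, hexp.le, not_lt.mpr hexp.le]
  have hTe' : T ^ (1 - 1/s) ≠ ⊤ := ENNReal.rpow_ne_top_of_nonneg hexp.le hT'
  have hsplit : T = T ^ (1 - 1/s) * T ^ (1/s) := by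
    rw [← ENNReal.rpow_add _ _ hT0 hT', sub_add_cancel, ENNReal.rpow_one]
  have hle : T ^ (1/s) ≤ G := by
    refine (ENNReal.mul_le_mul_iff_right hTe0 hTe').mp ?_
    rw [← hsplit]
    exact hTint
  calc T = (T ^ (1/s)) ^ s := by
        rw [← ENNReal.rpow_mul, one_div_mul_cancel hs0.ne', ENNReal.rpow_one]
    _ ≤ G ^ s := ENNReal.rpow_le_rpow hle hs0.le
end
end

section
/- Let s > 1, 0 < α < n/s, and let μ be a nonnegative Borel measure on ℝⁿ. Then for every x ∈ ℝⁿ, W_{α,s}μ(x) ≤ 2^{(n-αs)/(s-1)} · sup{ W_{α,s}μ(y) : y ∈ supp(μ) }, where W_{α,s}μ(x) = ∫₀^∞ [μ(B_t(x))/t^{n-αs}]^{1/(s-1)} dt/t is the Wolff potential. -/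
open MeasureTheory ENNReal Set Filter

noncomputable section

/-- The complement of the support is null. -/
lemma measure_compl_measSupport {n : ℕ} (μ : Measure (Rn n)) :
    μ (measSupport μ)ᶜ = 0 := by
  apply measure_null_of_locally_null
  intro x hx
  simp only [measSupport, mem_compl_iff, mem_setOf_eq, not_forall, not_lt,
    nonpos_iff_eq_zero, exists_prop] at hx
  obtain ⟨r, hr, hr0⟩ := hx
  exact ⟨Metric.ball x r, mem_nhdsWithin_of_mem_nhds (Metric.ball_mem_nhds x hr), hr0⟩

lemma isClosed_measSupport {n : ℕ} (μ : Measure (Rn n)) :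
    IsClosed (measSupport μ) := by
  rw [← isOpen_compl_iff, isOpen_iff_mem_nhds]
  intro x hx
  simp only [measSupport, mem_compl_iff, mem_setOf_eq, not_forall, not_lt,
    nonpos_iff_eq_zero, exists_prop] at hx
  obtain ⟨r, hr, hr0⟩ := hx
  filter_upwards [Metric.ball_mem_nhds x (half_pos hr)] with y hy
  simp only [measSupport, mem_compl_iff, mem_setOf_eq, not_forall, not_lt,
    nonpos_iff_eq_zero, exists_prop]
  refine ⟨r / 2, half_pos hr, measure_mono_null (fun z hz => ?_) hr0⟩
  calc dist z x ≤ dist z y + dist y x := dist_triangle _ _ _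
    _ < r / 2 + r / 2 := add_lt_add hz (Metric.mem_ball.mp hy)
    _ = r := add_halves r

/-- Substitution u = 2t in an `lintegral` over `Ioi 0`. -/
lemma lintegral_Ioi_comp_two_mul (F : ℝ → ℝ≥0∞) :
    ∫⁻ t in Set.Ioi (0 : ℝ), F (2 * t) = 2⁻¹ * ∫⁻ u in Set.Ioi (0 : ℝ), F u := by
  have h2 : (2 : ℝ) ≠ 0 := two_ne_zero
  set e : ℝ ≃ᵐ ℝ := (Homeomorph.mulLeft₀ (2 : ℝ) h2).toMeasurableEquiv with he
  have hce : ⇑e = fun t : ℝ => 2 * t := rfl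
  have hpre : (fun t : ℝ => 2 * t) ⁻¹' (Set.Ioi 0) = Set.Ioi 0 := by
    ext t
    simp only [Set.mem_preimage, Set.mem_Ioi]
    constructor
    · intro h; nlinarith
    · intro h; nlinarith
  have hmap : Measure.map e (volume.restrict (Set.Ioi (0:ℝ)))
      = (2⁻¹ : ℝ≥0∞) • volume.restrict (Set.Ioi (0:ℝ)) := by
    rw [hce]
    conv_lhs => rw [← hpre]
    rw [← Measure.restrict_map (measurable_const_mul 2) measurableSet_Ioi,
      Real.map_volume_mul_left h2, Measure.restrict_smul]
    congr 1
    rw [abs_of_pos (by norm_num : (0:ℝ) < 2⁻¹), ENNReal.ofReal_inv_of_pos two_pos]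
    norm_num
  calc ∫⁻ t in Set.Ioi (0 : ℝ), F (2 * t)
      = ∫⁻ t, F (e t) ∂(volume.restrict (Set.Ioi (0:ℝ))) := by rw [hce]
    _ = ∫⁻ u, F u ∂(Measure.map e (volume.restrict (Set.Ioi (0:ℝ)))) :=
        (lintegral_map_equiv F e).symm
    _ = 2⁻¹ * ∫⁻ u in Set.Ioi (0 : ℝ), F u := by rw [hmap, lintegral_smul_measure, smul_eq_mul]

/-- boundedness principle for Wolff potentials. -/
theorem stmt2 (n : ℕ) (α s : ℝ) (hs : 1 < s) (hα : 0 < α) (hαs : α < n / s)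
    (μ : Measure (Rn n)) [IsLocallyFiniteMeasure μ] (x : Rn n) :
    wolff n α s μ x ≤
      ENNReal.ofReal (2 ^ (((n : ℝ) - α * s) / (s - 1))) *
        ⨆ y ∈ measSupport μ, wolff n α s μ y := by

  have hs1 : (0:ℝ) < s - 1 := by linarith
  have hγpos : (0:ℝ) < 1 / (s - 1) := by positivity
  have hs0 : (0:ℝ) < s := by linarith
  have hβpos : (0:ℝ) < (n : ℝ) - α * s := sub_pos.mpr ((lt_div_iff₀ hs0).mp hαs)
  rcases Set.eq_empty_or_nonempty (measSupport μ) with hS | hS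
  · -- support empty: the measure is zero and so is the Wolff potential
    have huniv : μ Set.univ = 0 := by
      have h := measure_compl_measSupport μ
      rwa [hS, Set.compl_empty] at h
    have hμ : ∀ t : ℝ, μ (Metric.ball x t) = 0 :=
      fun t => measure_mono_null (Set.subset_univ _) huniv
    have h0 : wolff n α s μ x = 0 := by
      simp only [wolff, hμ, ENNReal.zero_div, ENNReal.zero_rpow_of_pos hγpos, lintegral_zero]
    rw [h0]
    exact zero_le
  · obtain ⟨y, hyS, hyd⟩ := (isClosed_measSupport μ).exists_infDist_eq_dist hS x
    have hball : ∀ t : ℝ, 0 < t → μ (Metric.ball x t) ≤ μ (Metric.ball y (2 * t)) := by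
      intro t ht
      have hnull : μ (Metric.ball x t \ measSupport μ) = 0 :=
        measure_mono_null (Set.diff_subset_compl _ _) (measure_compl_measSupport μ)
      have hsub : Metric.ball x t ∩ measSupport μ ⊆ Metric.ball y (2 * t) := by
        rintro z ⟨hz1, hz2⟩
        have h1 : dist x y ≤ dist x z := hyd ▸ Metric.infDist_le_dist_of_mem hz2
        have h2 : dist z x < t := Metric.mem_ball.mp hz1
        rw [dist_comm x z] at h1
        rw [Metric.mem_ball]
        calc dist z y ≤ dist z x + dist x y := dist_triangle z x y
          _ < 2 * t := by linarith
      calc μ (Metric.ball x t)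
          ≤ μ (Metric.ball x t ∩ measSupport μ) + μ (Metric.ball x t \ measSupport μ) :=
            measure_le_inter_add_diff μ _ _
        _ = μ (Metric.ball x t ∩ measSupport μ) := by rw [hnull, add_zero]
        _ ≤ μ (Metric.ball y (2 * t)) := measure_mono hsub
    have key : ∀ t : ℝ, 0 < t →
        (μ (Metric.ball x t) / ENNReal.ofReal (t ^ ((n:ℝ) - α * s))) ^ (1 / (s - 1)) /
            ENNReal.ofReal t
          ≤ (ENNReal.ofReal 2 *
              ENNReal.ofReal (2 ^ (((n:ℝ) - α * s) * (1 / (s - 1))))) *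
            ((μ (Metric.ball y (2 * t)) /
                ENNReal.ofReal ((2 * t) ^ ((n:ℝ) - α * s))) ^ (1 / (s - 1)) /
              ENNReal.ofReal (2 * t)) := by
      intro t ht
      set β : ℝ := (n:ℝ) - α * s with hβ
      set γ : ℝ := 1 / (s - 1) with hγ
      have hu : (0:ℝ) < 2 * t := by linarith
      set P : ℝ≥0∞ := ENNReal.ofReal ((2 * t) ^ β) with hP
      set Q : ℝ≥0∞ := ENNReal.ofReal (2 ^ β) with hQ
      have hQ0 : Q ≠ 0 := (ENNReal.ofReal_pos.mpr (Real.rpow_pos_of_pos two_pos β)).ne'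
      have hQtop : Q ≠ ∞ := ENNReal.ofReal_ne_top
      have h2ne : ENNReal.ofReal 2 ≠ 0 := (ENNReal.ofReal_pos.mpr two_pos).ne'
      have htβ : ENNReal.ofReal (t ^ β) = P / Q := by
        rw [hP, hQ, ← ENNReal.ofReal_div_of_pos (Real.rpow_pos_of_pos two_pos β),
          ← Real.div_rpow hu.le two_pos.le, show (2 * t) / 2 = t by ring]
      have h1 : μ (Metric.ball x t) / ENNReal.ofReal (t ^ β)
          = μ (Metric.ball x t) * (Q / P) := by
        rw [htβ, div_eq_mul_inv, ENNReal.inv_div (Or.inl hQtop) (Or.inl hQ0)]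
      have hot : ENNReal.ofReal t = ENNReal.ofReal (2 * t) / ENNReal.ofReal 2 := by
        rw [← ENNReal.ofReal_div_of_pos two_pos]
        norm_num
      calc (μ (Metric.ball x t) / ENNReal.ofReal (t ^ β)) ^ γ / ENNReal.ofReal t
          = (μ (Metric.ball x t) * (Q / P)) ^ γ *
              (ENNReal.ofReal 2 / ENNReal.ofReal (2 * t)) := by
            rw [h1, hot, div_eq_mul_inv _ (ENNReal.ofReal (2 * t) / ENNReal.ofReal 2),
              ENNReal.inv_div (Or.inl ENNReal.ofReal_ne_top) (Or.inl h2ne)]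
        _ ≤ (μ (Metric.ball y (2 * t)) * (Q / P)) ^ γ *
              (ENNReal.ofReal 2 / ENNReal.ofReal (2 * t)) := by
            exact mul_le_mul_left
              (ENNReal.rpow_le_rpow (mul_le_mul_left (hball t ht) _) hγpos.le) _
        _ = (Q ^ γ * (μ (Metric.ball y (2 * t)) / P) ^ γ) *
              (ENNReal.ofReal 2 / ENNReal.ofReal (2 * t)) := by
            rw [← ENNReal.mul_rpow_of_nonneg _ _ hγpos.le]
            congr 2
            simp only [div_eq_mul_inv]
            ring
        _ = (ENNReal.ofReal 2 * ENNReal.ofReal (2 ^ (β * γ))) *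
              ((μ (Metric.ball y (2 * t)) / P) ^ γ / ENNReal.ofReal (2 * t)) := by
            rw [hQ, ENNReal.ofReal_rpow_of_pos (Real.rpow_pos_of_pos two_pos β),
              ← Real.rpow_mul (by norm_num : (0:ℝ) ≤ 2)]
            simp only [div_eq_mul_inv]
            ring
    have hCne : (ENNReal.ofReal 2 *
        ENNReal.ofReal (2 ^ (((n:ℝ) - α * s) * (1 / (s - 1))))) ≠ ∞ :=
      ENNReal.mul_ne_top ENNReal.ofReal_ne_top ENNReal.ofReal_ne_top
    calc wolff n α s μ x
        = ∫⁻ t in Set.Ioi (0:ℝ),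
            (μ (Metric.ball x t) / ENNReal.ofReal (t ^ ((n:ℝ) - α * s))) ^ (1 / (s - 1)) /
              ENNReal.ofReal t := rfl
      _ ≤ ∫⁻ t in Set.Ioi (0:ℝ),
            (ENNReal.ofReal 2 * ENNReal.ofReal (2 ^ (((n:ℝ) - α * s) * (1 / (s - 1))))) *
            ((μ (Metric.ball y (2 * t)) /
                ENNReal.ofReal ((2 * t) ^ ((n:ℝ) - α * s))) ^ (1 / (s - 1)) /
              ENNReal.ofReal (2 * t)) := by
          refine lintegral_mono_ae ?_
          filter_upwards [ae_restrict_mem measurableSet_Ioi] with t ht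
          exact key t ht
      _ = (ENNReal.ofReal 2 * ENNReal.ofReal (2 ^ (((n:ℝ) - α * s) * (1 / (s - 1))))) *
            ∫⁻ t in Set.Ioi (0:ℝ),
              (μ (Metric.ball y (2 * t)) /
                  ENNReal.ofReal ((2 * t) ^ ((n:ℝ) - α * s))) ^ (1 / (s - 1)) /
                ENNReal.ofReal (2 * t) :=
          lintegral_const_mul' _ _ hCne
      _ = (ENNReal.ofReal 2 * ENNReal.ofReal (2 ^ (((n:ℝ) - α * s) * (1 / (s - 1))))) *
            (2⁻¹ * wolff n α s μ y) := by
          rw [lintegral_Ioi_comp_two_mul (fun u =>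
            (μ (Metric.ball y u) / ENNReal.ofReal (u ^ ((n:ℝ) - α * s))) ^ (1 / (s - 1)) /
              ENNReal.ofReal u)]
          rfl
      _ = ENNReal.ofReal (2 ^ (((n:ℝ) - α * s) * (1 / (s - 1)))) * wolff n α s μ y := by
          rw [ENNReal.ofReal_ofNat]
          rw [show (2 : ℝ≥0∞) * ENNReal.ofReal (2 ^ (((n:ℝ) - α * s) * (1 / (s - 1)))) *
              (2⁻¹ * wolff n α s μ y)
            = (2 * 2⁻¹) * (ENNReal.ofReal (2 ^ (((n:ℝ) - α * s) * (1 / (s - 1)))) *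
              wolff n α s μ y) by ring]
          rw [ENNReal.mul_inv_cancel two_ne_zero ENNReal.ofNat_ne_top, one_mul]
      _ ≤ ENNReal.ofReal (2 ^ (((n:ℝ) - α * s) / (s - 1))) *
            ⨆ z ∈ measSupport μ, wolff n α s μ z := by
          rw [mul_one_div ((n:ℝ) - α * s) (s - 1)]
          exact mul_le_mul_right (le_biSup _ hyS) _
end
end

section
/- Let s > 1, 0 < α < n/s, and 1 < q < s. There is a constant C > 0 such that for every nonnegative measurable f and every weight w with ‖w‖_{L^q(cap_{α,s})} ≤ 1, one has (∫_{ℝⁿ} (I_α f)^q dcap_{α,s})^{1/q} ≤ C (∫_{ℝⁿ} f^s w^{q-s} dx)^{1/s}, assuming the cases q = 1 and q = s of this inequality (the latter being Maz'ya's capacitary strong type inequality) as hypotheses. -/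
open MeasureTheory ENNReal Set Filter

noncomputable section

section Helpers

variable {n : ℕ} {α s : ℝ}

lemma kernelMeas (x : Rn n) {f : Rn n → ℝ≥0∞} (hf : Measurable f) :
    Measurable fun y => ENNReal.ofReal (‖x - y‖ ^ (α - (n : ℝ))) * f y :=
  (((measurable_const.sub measurable_id).norm.pow_const _).ennreal_ofReal).mul hf

lemma rieszPotential_add {f g : Rn n → ℝ≥0∞} (hf : Measurable f) (x : Rn n) :
    rieszPotential n α (fun y => f y + g y) x
      = rieszPotential n α f x + rieszPotential n α g x := by
  unfold rieszPotential
  rw [lintegral_congr (g := fun y => ENNReal.ofReal (‖x - y‖ ^ (α - (n : ℝ))) * f y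
        + ENNReal.ofReal (‖x - y‖ ^ (α - (n : ℝ))) * g y) (fun y => mul_add _ _ _),
      lintegral_add_left (kernelMeas x hf), mul_add]

lemma rieszPotential_const_mul {c : ℝ≥0∞} (hc : c ≠ ⊤) (f : Rn n → ℝ≥0∞) (x : Rn n) :
    rieszPotential n α (fun y => c * f y) x = c * rieszPotential n α f x := by
  unfold rieszPotential
  rw [lintegral_congr (g := fun y => c * (ENNReal.ofReal (‖x - y‖ ^ (α - (n : ℝ))) * f y))
        (fun y => mul_left_comm _ _ _),
      lintegral_const_mul' c _ hc, mul_left_comm]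

lemma rieszCap_le_of {E : Set (Rn n)} {f : Rn n → ℝ≥0∞} (hf : Measurable f)
    (h : ∀ x ∈ E, 1 ≤ rieszPotential n α f x) :
    rieszCap n α s E ≤ ∫⁻ y, f y ^ s := by
  unfold rieszCap
  exact iInf_le_of_le f (iInf_le_of_le ⟨hf, h⟩ le_rfl)

lemma rieszCap_mono {E F : Set (Rn n)} (h : E ⊆ F) : rieszCap n α s E ≤ rieszCap n α s F := by
  refine le_iInf fun f => le_iInf fun hf => ?_
  exact rieszCap_le_of hf.1 fun x hx => hf.2 x (h hx)

lemma choquet_mono {g₁ g₂ : Rn n → ℝ≥0∞} (h : ∀ x, g₁ x ≤ g₂ x) :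
    choquet (rieszCap n α s) g₁ ≤ choquet (rieszCap n α s) g₂ :=
  lintegral_mono fun _ => rieszCap_mono fun _ hx => lt_of_lt_of_le hx (h _)

lemma add_rpow_le (hs : 0 ≤ s) (a b : ℝ≥0∞) :
    (a + b) ^ s ≤ 2 ^ s * a ^ s + 2 ^ s * b ^ s := by
  rcases le_total a b with h | h
  · calc (a + b) ^ s ≤ (2 * b) ^ s := by
          refine ENNReal.rpow_le_rpow ?_ hs
          rw [two_mul]; exact add_le_add_left h _
    _ = 2 ^ s * b ^ s := ENNReal.mul_rpow_of_nonneg _ _ hs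
    _ ≤ _ := le_add_self
  · calc (a + b) ^ s ≤ (2 * a) ^ s := by
          refine ENNReal.rpow_le_rpow ?_ hs
          rw [two_mul]; exact add_le_add_right h _
    _ = 2 ^ s * a ^ s := ENNReal.mul_rpow_of_nonneg _ _ hs
    _ ≤ _ := le_self_add

lemma rieszCap_union_null (hs1 : 1 ≤ s) {Y N : Set (Rn n)} (hN : rieszCap n α s N = 0) :
    rieszCap n α s (Y ∪ N) ≤ 2 ^ s * rieszCap n α s Y := by
  have hs0 : (0:ℝ) ≤ s := by linarith
  have h2s : (2:ℝ≥0∞) ^ s ≠ ⊤ := ENNReal.rpow_ne_top_of_nonneg hs0 (by norm_num)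
  by_cases hY : rieszCap n α s Y = ⊤
  · rw [hY, ENNReal.mul_top]
    · exact le_top
    · exact (ENNReal.rpow_pos (by norm_num) (by norm_num)).ne'
  apply ENNReal.le_of_forall_pos_le_add
  intro ε hε _
  set δ : ℝ≥0∞ := (ε : ℝ≥0∞) / (2 * 2 ^ s + 2) with hδdef
  have hδ0 : δ ≠ 0 := by
    refine (ENNReal.div_pos (by exact_mod_cast hε.ne') ?_).ne'
    exact ENNReal.add_ne_top.mpr ⟨ENNReal.mul_ne_top (by norm_num) h2s, by norm_num⟩
  have h1 : rieszCap n α s Y < rieszCap n α s Y + δ := ENNReal.lt_add_right hY hδ0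
  rw [rieszCap] at h1
  simp only [iInf_lt_iff] at h1
  obtain ⟨f, ⟨hfm, hfY⟩, hfint⟩ := h1
  have h2 : rieszCap n α s N < δ := by rw [hN]; exact pos_iff_ne_zero.mpr hδ0
  rw [rieszCap] at h2
  simp only [iInf_lt_iff] at h2
  obtain ⟨g, ⟨hgm, hgN⟩, hgint⟩ := h2
  have hcap : rieszCap n α s (Y ∪ N) ≤ ∫⁻ y, (f y + g y) ^ s := by
    refine rieszCap_le_of (hfm.add hgm) ?_
    intro x hx
    rw [rieszPotential_add hfm x]
    rcases hx with hx | hx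
    · exact le_trans (hfY x hx) le_self_add
    · exact le_trans (hgN x hx) le_add_self
  refine hcap.trans ?_
  calc (∫⁻ y, (f y + g y) ^ s)
      ≤ ∫⁻ y, (2 ^ s * f y ^ s + 2 ^ s * g y ^ s) := lintegral_mono fun y => add_rpow_le hs0 _ _
    _ = 2 ^ s * (∫⁻ y, f y ^ s) + 2 ^ s * (∫⁻ y, g y ^ s) := by
        rw [lintegral_add_left ((hfm.pow_const s).const_mul _),
          lintegral_const_mul' _ _ h2s, lintegral_const_mul' _ _ h2s]
    _ ≤ 2 ^ s * (rieszCap n α s Y + δ) + 2 ^ s * δ :=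
        add_le_add (mul_le_mul' le_rfl hfint.le) (mul_le_mul' le_rfl hgint.le)
    _ = 2 ^ s * rieszCap n α s Y + (2 * 2 ^ s) * δ := by ring
    _ ≤ 2 ^ s * rieszCap n α s Y + ε := by
        refine add_le_add_right ?_ _
        calc (2 * 2 ^ s) * δ ≤ (2 * 2 ^ s + 2) * δ := mul_le_mul' le_self_add le_rfl
          _ ≤ ε := by rw [hδdef]; exact ENNReal.mul_div_le

lemma riesz_holder {θ : ℝ} (hθ0 : 0 < θ) (hθ1 : θ < 1) {g w : Rn n → ℝ≥0∞} {b c : ℝ}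
    (hbc : b * (1 - θ) + c * θ = 0)
    (hgw : ∀ y, g y ≠ 0 → w y ≠ 0 ∧ w y ≠ ⊤)
    (hgm : Measurable g) (hwm : Measurable w) (x : Rn n) :
    rieszPotential n α g x ≤
      rieszPotential n α (fun y => g y * w y ^ b) x ^ (1 - θ) *
        rieszPotential n α (fun y => g y * w y ^ c) x ^ θ := by
  have hθ1' : (0:ℝ) < 1 - θ := by linarith
  set k : Rn n → ℝ≥0∞ := fun y => ENNReal.ofReal (‖x - y‖ ^ (α - (n : ℝ))) with hk
  have key : ∀ y, k y * g y
      = (k y * (g y * w y ^ b)) ^ (1 - θ) * (k y * (g y * w y ^ c)) ^ θ := by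
    intro y
    by_cases hgy : g y = 0
    · simp only [hgy, zero_mul, mul_zero]
      rw [ENNReal.zero_rpow_of_pos hθ1', zero_mul]
    · obtain ⟨hw0, hwt⟩ := hgw y hgy
      calc k y * g y
          = (k y * g y) ^ ((1 - θ) + θ) * (w y) ^ (b * (1 - θ) + c * θ) := by
            rw [hbc, ENNReal.rpow_zero, mul_one]
            norm_num
        _ = ((k y * g y) ^ (1 - θ) * (w y ^ b) ^ (1 - θ))
              * ((k y * g y) ^ θ * (w y ^ c) ^ θ) := by
            rw [ENNReal.rpow_add_of_nonneg _ _ hθ1'.le hθ0.le,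
              ENNReal.rpow_add _ _ hw0 hwt, ENNReal.rpow_mul, ENNReal.rpow_mul]
            ring
        _ = (k y * (g y * w y ^ b)) ^ (1 - θ) * (k y * (g y * w y ^ c)) ^ θ := by
            rw [← ENNReal.mul_rpow_of_nonneg _ _ hθ1'.le,
              ← ENNReal.mul_rpow_of_nonneg _ _ hθ0.le, mul_assoc, mul_assoc]
  have hconj : Real.HolderConjugate (1 / (1 - θ)) (1 / θ) := by
    constructor
    · rw [one_div, one_div, inv_inv, inv_inv, inv_one]; ring
    · exact div_pos one_pos hθ1'
    · exact div_pos one_pos hθ0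
  have hm1 : Measurable fun y => k y * (g y * w y ^ b) :=
    kernelMeas x (hgm.mul (hwm.pow_const b))
  have hm2 : Measurable fun y => k y * (g y * w y ^ c) :=
    kernelMeas x (hgm.mul (hwm.pow_const c))
  have hH := ENNReal.lintegral_mul_le_Lp_mul_Lq volume hconj
    (f := fun y => (k y * (g y * w y ^ b)) ^ (1 - θ))
    (g := fun y => (k y * (g y * w y ^ c)) ^ θ)
    ((hm1.pow_const _).aemeasurable) ((hm2.pow_const _).aemeasurable)
  simp only [Pi.mul_apply, ← ENNReal.rpow_mul, one_div_one_div] at hH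
  rw [mul_one_div_cancel hθ1'.ne', mul_one_div_cancel hθ0.ne'] at hH
  simp only [ENNReal.rpow_one] at hH
  unfold rieszPotential
  rw [lintegral_congr key]
  calc ENNReal.ofReal (rieszConst n α)
        * ∫⁻ y, (k y * (g y * w y ^ b)) ^ (1 - θ) * (k y * (g y * w y ^ c)) ^ θ
      ≤ ENNReal.ofReal (rieszConst n α)
        * ((∫⁻ y, k y * (g y * w y ^ b)) ^ (1 - θ) * (∫⁻ y, k y * (g y * w y ^ c)) ^ θ) :=
        mul_le_mul_right hH _
    _ = (ENNReal.ofReal (rieszConst n α) * ∫⁻ y, k y * (g y * w y ^ b)) ^ (1 - θ)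
        * (ENNReal.ofReal (rieszConst n α) * ∫⁻ y, k y * (g y * w y ^ c)) ^ θ := by
        rw [ENNReal.mul_rpow_of_nonneg _ _ hθ1'.le, ENNReal.mul_rpow_of_nonneg _ _ hθ0.le]
        nth_rewrite 1 [show ENNReal.ofReal (rieszConst n α)
              = ENNReal.ofReal (rieszConst n α) ^ (1 - θ) * ENNReal.ofReal (rieszConst n α) ^ θ by
            rw [← ENNReal.rpow_add_of_nonneg _ _ hθ1'.le hθ0.le]; norm_num]
        ring

end Helpers

/-- interpolation between the endpoint cases q = 1 and q = s of the weighted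
capacitary strong type inequality. -/
theorem stmt6 (n : ℕ) (α s q θ : ℝ) (hs : 1 < s) (hα : 0 < α) (hαn : α < n / s)
    (hq : 1 < q) (hqs : q < s) (hθ : θ ∈ Set.Ioo (0 : ℝ) 1)
    (hθq : 1 / q = (1 - θ) / s + θ)
    (C₁ C₂ C₃ : ℝ≥0∞) (hC₁ : C₁ ≠ ⊤) (hC₂ : C₂ ≠ ⊤) (hC₃ : C₃ ≠ ⊤)
    -- (a) the case q = 1:
    (ha : ∀ h v : Rn n → ℝ≥0∞, Measurable h → Measurable v →
      choquet (rieszCap n α s) v ≤ 1 →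
      choquet (rieszCap n α s) (rieszPotential n α h) ≤
        C₁ * (∫⁻ x, h x ^ s * v x ^ (1 - s)) ^ (1 / s))
    -- (b) the case q = s (Maz'ya's capacitary strong type inequality):
    (hb : ∀ h : Rn n → ℝ≥0∞, Measurable h →
      choquet (rieszCap n α s) (fun x => rieszPotential n α h x ^ s) ≤ C₂ * ∫⁻ x, h x ^ s)
    -- (c) Hölder's inequality for the Choquet integral:
    (hc : ∀ u v : Rn n → ℝ≥0∞,
      choquet (rieszCap n α s) (fun x => u x ^ ((1 - θ) * q) * v x ^ (θ * q)) ≤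
        C₃ * choquet (rieszCap n α s) (fun x => u x ^ s) ^ ((1 - θ) * q / s) *
          choquet (rieszCap n α s) v ^ (θ * q)) :
    ∃ C : ℝ≥0∞, C ≠ ⊤ ∧ ∀ f w : Rn n → ℝ≥0∞, Measurable f → Measurable w →
      choquet (rieszCap n α s) (fun x => w x ^ q) ≤ 1 →
      choquet (rieszCap n α s) (fun x => rieszPotential n α f x ^ q) ^ (1 / q) ≤
        C * (∫⁻ x, f x ^ s * w x ^ (q - s)) ^ (1 / s) := by
  classical
  obtain ⟨hθ0, hθ1⟩ := hθ
  have hs0 : (0:ℝ) < s := by linarith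
  have hq0 : (0:ℝ) < q := by linarith
  have h2t : (2:ℝ≥0∞) ≠ ⊤ := by norm_num
  have h2s : (2:ℝ≥0∞) ^ s ≠ ⊤ := ENNReal.rpow_ne_top_of_nonneg hs0.le h2t
  have he₁ : (0:ℝ) ≤ (1 - θ) * q / s := le_of_lt (div_pos (mul_pos (by linarith) hq0) hs0)
  have he₂ : (0:ℝ) ≤ θ * q := le_of_lt (mul_pos hθ0 hq0)
  set K₀ : ℝ≥0∞ := C₃ * C₂ ^ ((1 - θ) * q / s) * C₁ ^ (θ * q) with hK₀
  have hK₀t : K₀ ≠ ⊤ :=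
    ENNReal.mul_ne_top (ENNReal.mul_ne_top hC₃ (ENNReal.rpow_ne_top_of_nonneg he₁ hC₂))
      (ENNReal.rpow_ne_top_of_nonneg he₂ hC₁)
  refine ⟨2 ^ (s / q) * (2 * K₀ ^ (1 / q)) + 1, ?_, ?_⟩
  · refine ENNReal.add_ne_top.mpr ⟨ENNReal.mul_ne_top ?_ (ENNReal.mul_ne_top h2t ?_), by norm_num⟩
    · exact ENNReal.rpow_ne_top_of_nonneg (by positivity) h2t
    · exact ENNReal.rpow_ne_top_of_nonneg (by positivity) hK₀t
  intro f w hf hw hw1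
  have hC0 : (2:ℝ≥0∞) ^ (s / q) * (2 * K₀ ^ (1 / q)) + 1 ≠ 0 :=
    (lt_of_lt_of_le zero_lt_one le_add_self).ne'
  -- splitting of f according to where w = ⊤
  have hAm : MeasurableSet {x | w x = ⊤} := hw (measurableSet_singleton ⊤)
  set f₁ : Rn n → ℝ≥0∞ := fun x => if w x = ⊤ then 0 else f x with hf₁d
  set f₂ : Rn n → ℝ≥0∞ := fun x => if w x = ⊤ then f x else 0 with hf₂d
  have hf₁m : Measurable f₁ := Measurable.ite hAm measurable_const hf
  have hf₂m : Measurable f₂ := Measurable.ite hAm hf measurable_const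
  have hfeq : f = fun y => f₁ y + f₂ y := by
    funext x
    by_cases h : w x = ⊤ <;> simp [hf₁d, hf₂d, h]
  have hIadd : ∀ x, rieszPotential n α f x
      = rieszPotential n α f₁ x + rieszPotential n α f₂ x := by
    intro x
    conv_lhs => rw [hfeq]
    exact rieszPotential_add hf₁m x
  -- the contribution of f₂ is capacity-negligible
  have hch2 : choquet (rieszCap n α s) (rieszPotential n α f₂) = 0 := by
    have h0 : choquet (rieszCap n α s) (rieszPotential n α f₂) ≤
        C₁ * (∫⁻ x, f₂ x ^ s * (w x ^ q) ^ (1 - s)) ^ (1 / s) :=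
      ha f₂ (fun x => w x ^ q) hf₂m (hw.pow_const q) hw1
    have hz : (∫⁻ x, f₂ x ^ s * (w x ^ q) ^ (1 - s)) = 0 := by
      rw [lintegral_congr (g := fun _ => (0:ℝ≥0∞)) fun x => ?_, lintegral_zero]
      by_cases hwx : w x = ⊤
      · rw [← ENNReal.rpow_mul, hwx,
          ENNReal.top_rpow_of_neg (by nlinarith : q * (1 - s) < 0), mul_zero]
      · simp only [hf₂d]
        rw [if_neg hwx, ENNReal.zero_rpow_of_pos hs0, zero_mul]
    rw [hz, ENNReal.zero_rpow_of_pos (by positivity), mul_zero] at h0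
    exact le_zero_iff.mp h0
  have hnull : ∀ u : ℝ≥0∞, u ≠ 0 →
      rieszCap n α s {x | u < rieszPotential n α f₂ x} = 0 := by
    intro u hu
    by_contra hcne
    obtain ⟨t₀, ht₀, ht₀le⟩ : ∃ t₀ : ℝ, 0 < t₀ ∧ ENNReal.ofReal t₀ ≤ u := by
      rcases eq_or_ne u ⊤ with h | h
      · exact ⟨1, one_pos, by simp [h]⟩
      · exact ⟨u.toReal, ENNReal.toReal_pos hu h, le_of_eq (ENNReal.ofReal_toReal h)⟩
    have hcalc : rieszCap n α s {x | u < rieszPotential n α f₂ x} * ENNReal.ofReal t₀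
        ≤ choquet (rieszCap n α s) (rieszPotential n α f₂) := by
      calc rieszCap n α s {x | u < rieszPotential n α f₂ x} * ENNReal.ofReal t₀
          = ∫⁻ _ in Set.Ioc (0:ℝ) t₀, rieszCap n α s {x | u < rieszPotential n α f₂ x} := by
            rw [setLIntegral_const, Real.volume_Ioc, sub_zero]
        _ ≤ ∫⁻ t in Set.Ioc (0:ℝ) t₀,
              rieszCap n α s {x | ENNReal.ofReal t < rieszPotential n α f₂ x} := by
            refine setLIntegral_mono' measurableSet_Ioc fun t ht => rieszCap_mono fun x hx => ?_
            exact lt_of_le_of_lt (le_trans (ENNReal.ofReal_le_ofReal ht.2) ht₀le) hx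
        _ ≤ ∫⁻ t in Set.Ioi (0:ℝ),
              rieszCap n α s {x | ENNReal.ofReal t < rieszPotential n α f₂ x} :=
            lintegral_mono_set Set.Ioc_subset_Ioi_self
        _ = _ := rfl
    rw [hch2, le_zero_iff] at hcalc
    rcases mul_eq_zero.mp hcalc with h | h
    · exact hcne h
    · exact (ENNReal.ofReal_pos.mpr ht₀).ne' h
  -- step 4: reduce to f₁
  have step4 : choquet (rieszCap n α s) (fun x => rieszPotential n α f x ^ q)
      ≤ 2 ^ s * choquet (rieszCap n α s) (fun x => (2 * rieszPotential n α f₁ x) ^ q) := by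
    unfold choquet
    rw [← lintegral_const_mul' _ _ h2s]
    refine setLIntegral_mono' measurableSet_Ioi fun t ht => ?_
    have ht0 : (0:ℝ) < t := ht
    have ht' : (0:ℝ≥0∞) < ENNReal.ofReal t := ENNReal.ofReal_pos.mpr ht0
    set u : ℝ≥0∞ := ENNReal.ofReal t ^ (1 / q) / 2 with hud
    have hu : u ≠ 0 := by
      refine (ENNReal.div_pos ?_ h2t).ne'
      exact (ENNReal.rpow_pos ht' ENNReal.ofReal_ne_top).ne'
    have hsub : {x | ENNReal.ofReal t < rieszPotential n α f x ^ q}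
        ⊆ {x | ENNReal.ofReal t < (2 * rieszPotential n α f₁ x) ^ q}
          ∪ {x | u < rieszPotential n α f₂ x} := by
      intro x hx
      simp only [Set.mem_setOf_eq] at hx
      rcases le_total (rieszPotential n α f₂ x) (rieszPotential n α f₁ x) with h | h
      · left
        show ENNReal.ofReal t < (2 * rieszPotential n α f₁ x) ^ q
        refine lt_of_lt_of_le hx (ENNReal.rpow_le_rpow ?_ hq0.le)
        rw [hIadd x, two_mul]
        exact add_le_add_right h _
      · right
        have hx2 : ENNReal.ofReal t < (2 * rieszPotential n α f₂ x) ^ q := by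
          refine lt_of_lt_of_le hx (ENNReal.rpow_le_rpow ?_ hq0.le)
          rw [hIadd x, two_mul]
          exact add_le_add_left h _
        have h3 : ENNReal.ofReal t ^ (1 / q) < 2 * rieszPotential n α f₂ x := by
          have h4 := ENNReal.rpow_lt_rpow hx2 (by positivity : (0:ℝ) < 1 / q)
          rwa [← ENNReal.rpow_mul, mul_one_div, div_self hq0.ne', ENNReal.rpow_one] at h4
        show u < rieszPotential n α f₂ x
        rw [hud, ENNReal.div_lt_iff (Or.inl (by norm_num)) (Or.inl h2t)]
        rwa [mul_comm]
    calc rieszCap n α s {x | ENNReal.ofReal t < rieszPotential n α f x ^ q}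
        ≤ rieszCap n α s ({x | ENNReal.ofReal t < (2 * rieszPotential n α f₁ x) ^ q}
            ∪ {x | u < rieszPotential n α f₂ x}) := rieszCap_mono hsub
      _ ≤ 2 ^ s * rieszCap n α s {x | ENNReal.ofReal t < (2 * rieszPotential n α f₁ x) ^ q} :=
          rieszCap_union_null hs.le (hnull u hu)
  -- case split on the measure of {f ≠ 0, w = 0}
  have hZm : MeasurableSet {x | f x ≠ 0 ∧ w x = 0} :=
    ((hf (measurableSet_singleton 0)).compl).inter (hw (measurableSet_singleton 0))
  rcases eq_or_ne (volume {x | f x ≠ 0 ∧ w x = 0}) 0 with hZ | hZ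
  · -- main case
    set g : Rn n → ℝ≥0∞ := fun x => 2 * (if w x = 0 ∨ w x = ⊤ then 0 else f x) with hgd
    have hgm : Measurable g := by
      refine measurable_const.mul (Measurable.ite ?_ measurable_const hf)
      exact MeasurableSet.union (hw (measurableSet_singleton 0)) (hw (measurableSet_singleton ⊤))
    have hgw : ∀ y, g y ≠ 0 → w y ≠ 0 ∧ w y ≠ ⊤ := by
      intro y hy
      by_cases h : w y = 0 ∨ w y = ⊤
      · exfalso; apply hy; simp [hgd, h]
      · push_neg at h; exact h
    have hptZ : ∀ y, y ∉ {x | f x ≠ 0 ∧ w x = 0} → 2 * f₁ y = g y := by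
      intro y hy
      by_cases h1 : w y = ⊤
      · simp [hf₁d, hgd, h1]
      · by_cases h2 : w y = 0
        · have hfy : f y = 0 := by
            by_contra hfy; exact hy ⟨hfy, h2⟩
          simp [hf₁d, hgd, h1, h2, hfy]
        · simp [hf₁d, hgd, h1, h2]
    have hae : (fun y => 2 * f₁ y) =ᵐ[volume] g := by
      rw [Filter.EventuallyEq, MeasureTheory.ae_iff]
      refine measure_mono_null ?_ hZ
      intro y hy
      simp only [Set.mem_setOf_eq] at hy
      by_contra hcon
      exact hy (hptZ y hcon)
    have hIg : ∀ x, rieszPotential n α g x = 2 * rieszPotential n α f₁ x := by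
      intro x
      rw [← rieszPotential_const_mul h2t f₁ x]
      unfold rieszPotential
      congr 1
      refine lintegral_congr_ae ?_
      filter_upwards [hae] with y hy
      rw [← hy]
    -- interpolation applied to g
    set b : ℝ := (q - s) / s with hbd
    set c : ℝ := q - 1 with hcd
    have hbc : b * (1 - θ) + c * θ = 0 := by
      rw [hbd, hcd]
      field_simp at hθq
      field_simp
      nlinarith [hθq]
    set h₁ : Rn n → ℝ≥0∞ := fun x => g x * w x ^ b with hh₁d
    set h₂ : Rn n → ℝ≥0∞ := fun x => g x * w x ^ c with hh₂d
    have hh₁m : Measurable h₁ := hgm.mul (hw.pow_const b)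
    have hh₂m : Measurable h₂ := hgm.mul (hw.pow_const c)
    set Dg : ℝ≥0∞ := ∫⁻ x, g x ^ s * w x ^ (q - s) with hDgd
    have ch1 : choquet (rieszCap n α s) (fun x => rieszPotential n α g x ^ q)
        ≤ choquet (rieszCap n α s)
            (fun x => rieszPotential n α h₁ x ^ ((1 - θ) * q)
              * rieszPotential n α h₂ x ^ (θ * q)) := by
      refine choquet_mono fun x => ?_
      calc rieszPotential n α g x ^ q
          ≤ (rieszPotential n α h₁ x ^ (1 - θ) * rieszPotential n α h₂ x ^ θ) ^ q :=
            ENNReal.rpow_le_rpow (riesz_holder hθ0 hθ1 hbc hgw hgm hw x) hq0.le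
        _ = _ := by
            rw [ENNReal.mul_rpow_of_nonneg _ _ hq0.le, ← ENNReal.rpow_mul, ← ENNReal.rpow_mul]
    have ch3 : choquet (rieszCap n α s) (fun x => rieszPotential n α h₁ x ^ s) ≤ C₂ * Dg := by
      refine (hb h₁ hh₁m).trans (le_of_eq ?_)
      rw [hDgd]
      congr 1
      refine lintegral_congr fun x => ?_
      rw [hh₁d]
      simp only []
      rw [ENNReal.mul_rpow_of_nonneg _ _ hs0.le, ← ENNReal.rpow_mul,
        div_mul_cancel₀ _ hs0.ne']
    have ch4 : choquet (rieszCap n α s) (rieszPotential n α h₂) ≤ C₁ * Dg ^ (1 / s) := by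
      have h0 : choquet (rieszCap n α s) (rieszPotential n α h₂) ≤
          C₁ * (∫⁻ x, h₂ x ^ s * (w x ^ q) ^ (1 - s)) ^ (1 / s) :=
        ha h₂ (fun x => w x ^ q) hh₂m (hw.pow_const q) hw1
      refine h0.trans (le_of_eq ?_)
      rw [hDgd]
      congr 2
      refine lintegral_congr fun x => ?_
      rw [hh₂d]
      simp only []
      by_cases hgx : g x = 0
      · rw [hgx, zero_mul, ENNReal.zero_rpow_of_pos hs0, zero_mul, zero_mul]
      · obtain ⟨hw0, hwt⟩ := hgw x hgx
        rw [ENNReal.mul_rpow_of_nonneg _ _ hs0.le, ← ENNReal.rpow_mul, ← ENNReal.rpow_mul,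
          mul_assoc, ← ENNReal.rpow_add _ _ hw0 hwt]
        congr 1
        rw [hcd]; ring
    have main : choquet (rieszCap n α s) (fun x => rieszPotential n α g x ^ q)
        ≤ K₀ * Dg ^ (q / s) := by
      refine ch1.trans ((hc (rieszPotential n α h₁) (rieszPotential n α h₂)).trans ?_)
      calc C₃ * choquet (rieszCap n α s) (fun x => rieszPotential n α h₁ x ^ s) ^ ((1 - θ) * q / s)
            * choquet (rieszCap n α s) (rieszPotential n α h₂) ^ (θ * q)
          ≤ C₃ * (C₂ * Dg) ^ ((1 - θ) * q / s) * (C₁ * Dg ^ (1 / s)) ^ (θ * q) := by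
            exact mul_le_mul' (mul_le_mul' le_rfl (ENNReal.rpow_le_rpow ch3 he₁))
              (ENNReal.rpow_le_rpow ch4 he₂)
        _ = K₀ * Dg ^ (q / s) := by
            rw [ENNReal.mul_rpow_of_nonneg _ _ he₁, ENNReal.mul_rpow_of_nonneg _ _ he₂,
              ← ENNReal.rpow_mul Dg, hK₀,
              show q / s = (1 - θ) * q / s + 1 / s * (θ * q) by ring,
              ENNReal.rpow_add_of_nonneg _ _ he₁ (mul_nonneg (by positivity) he₂)]
            ring
    have hDgD : Dg ≤ 2 ^ s * ∫⁻ x, f x ^ s * w x ^ (q - s) := by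
      rw [hDgd, ← lintegral_const_mul' _ _ h2s]
      refine lintegral_mono fun x => ?_
      rw [hgd]
      simp only []
      rw [ENNReal.mul_rpow_of_nonneg _ _ hs0.le, mul_assoc]
      refine mul_le_mul' le_rfl (mul_le_mul' (ENNReal.rpow_le_rpow ?_ hs0.le) le_rfl)
      split_ifs with h
      · exact zero_le
      · exact le_rfl
    -- final assembly
    have hexp1 : ((2:ℝ≥0∞) ^ s) ^ (1 / q) = 2 ^ (s / q) := by
      rw [← ENNReal.rpow_mul, mul_one_div]
    have hexp2 : ∀ X : ℝ≥0∞, (X ^ (q / s)) ^ (1 / q) = X ^ (1 / s) := by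
      intro X
      rw [← ENNReal.rpow_mul]
      congr 1
      rw [div_mul_div_comm, mul_one, mul_comm, ← div_div, div_self hq0.ne']
    have hexp3 : ((2:ℝ≥0∞) ^ s * ∫⁻ x, f x ^ s * w x ^ (q - s)) ^ (1 / s)
        = 2 * (∫⁻ x, f x ^ s * w x ^ (q - s)) ^ (1 / s) := by
      rw [ENNReal.mul_rpow_of_nonneg _ _ (by positivity), ← ENNReal.rpow_mul,
        mul_one_div, div_self hs0.ne', ENNReal.rpow_one]
    calc choquet (rieszCap n α s) (fun x => rieszPotential n α f x ^ q) ^ (1 / q)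
        ≤ (2 ^ s * choquet (rieszCap n α s)
            (fun x => (2 * rieszPotential n α f₁ x) ^ q)) ^ (1 / q) :=
          ENNReal.rpow_le_rpow step4 (by positivity)
      _ = (2 ^ s * choquet (rieszCap n α s)
            (fun x => rieszPotential n α g x ^ q)) ^ (1 / q) := by
          congr 3
          funext x
          rw [hIg x]
      _ ≤ (2 ^ s * (K₀ * ((2:ℝ≥0∞) ^ s * ∫⁻ x, f x ^ s * w x ^ (q - s)) ^ (q / s))) ^ (1 / q) := by
          refine ENNReal.rpow_le_rpow (mul_le_mul' le_rfl ?_) (by positivity)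
          exact main.trans (mul_le_mul' le_rfl (ENNReal.rpow_le_rpow hDgD (by positivity)))
      _ = 2 ^ (s / q) * (K₀ ^ (1 / q)
            * (2 * (∫⁻ x, f x ^ s * w x ^ (q - s)) ^ (1 / s))) := by
          rw [ENNReal.mul_rpow_of_nonneg _ _ (by positivity : (0:ℝ) ≤ 1 / q),
            ENNReal.mul_rpow_of_nonneg K₀ _ (by positivity : (0:ℝ) ≤ 1 / q),
            hexp1, hexp2, hexp3]
      _ = (2 ^ (s / q) * (2 * K₀ ^ (1 / q))) * (∫⁻ x, f x ^ s * w x ^ (q - s)) ^ (1 / s) := by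
          ring
      _ ≤ _ := mul_le_mul_left le_self_add _
  · -- degenerate case: the right-hand side is infinite
    have htop : (∫⁻ x, f x ^ s * w x ^ (q - s)) = ⊤ := by
      have hle : (⊤:ℝ≥0∞) * volume {x | f x ≠ 0 ∧ w x = 0}
          ≤ ∫⁻ x, f x ^ s * w x ^ (q - s) := by
        rw [← setLIntegral_const {x | f x ≠ 0 ∧ w x = 0} ⊤]
        refine le_trans (setLIntegral_mono' hZm fun x hx => ?_) (setLIntegral_le_lintegral _ _)
        obtain ⟨hfx, hwx⟩ := hx
        have hfs : f x ^ s ≠ 0 := by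
          intro hcon
          rcases ENNReal.rpow_eq_zero_iff.mp hcon with ⟨h1, _⟩ | ⟨_, h2⟩
          · exact hfx h1
          · linarith
        rw [hwx, ENNReal.zero_rpow_of_neg (by linarith : q - s < 0), ENNReal.mul_top hfs]
      rw [ENNReal.top_mul hZ] at hle
      exact top_le_iff.mp hle
    rw [htop, ENNReal.top_rpow_of_pos (by positivity : (0:ℝ) < 1 / s), ENNReal.mul_top hC0]
    exact le_top
end
end

section
/- Let μ be a nonnegative locally finite Borel measure on ℝⁿ, s > 1, 0 < α < n/s, 0 < r < s. If ∫ (I_α h)^r dμ ≤ A ‖h‖_{L^s}^r for all nonnegative h ∈ L^s(ℝⁿ), then μ is absolutely continuous with respect to the Riesz capacity cap_{α,s}: every set N with cap_{α,s}(N) = 0 is μ-measurable (for the completion of μ) with μ(N) = 0. -/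
open MeasureTheory ENNReal Set Filter

noncomputable section

/-- the trace inequality implies that μ vanishes on capacity-null sets. -/
theorem stmt16 (n : ℕ) (α s r : ℝ) (hs : 1 < s) (hα : 0 < α) (hαn : α < n / s)
    (hr : 0 < r) (hrs : r < s)
    (μ : Measure (Rn n)) [IsLocallyFiniteMeasure μ] (A : ℝ≥0∞) (hA : A ≠ ⊤)
    (htr : ∀ h : Rn n → ℝ≥0∞, Measurable h →
      (∫⁻ x, rieszPotential n α h x ^ r ∂μ) ≤ A * (∫⁻ y, h y ^ s) ^ (r / s)) :
    ∀ N : Set (Rn n), rieszCap n α s N = 0 → μ N = 0 := by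
  intro N hN
  have key : ∀ f : Rn n → ℝ≥0∞, Measurable f → (∀ x ∈ N, 1 ≤ rieszPotential n α f x) →
      μ N ≤ A * (∫⁻ y, f y ^ s) ^ (r / s) := by
    intro f hf h1
    have hmeas : Measurable (fun x => rieszPotential n α f x) := by
      unfold rieszPotential
      apply Measurable.const_mul
      apply Measurable.lintegral_prod_right
      exact (((measurable_fst.sub measurable_snd).norm.pow_const _).ennreal_ofReal.mul
        (hf.comp measurable_snd))
    have hsub : N ⊆ {x | 1 ≤ rieszPotential n α f x ^ r} := by
      intro x hx
      have := ENNReal.rpow_le_rpow (h1 x hx) hr.le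
      simpa using this
    calc μ N ≤ μ {x | 1 ≤ rieszPotential n α f x ^ r} := measure_mono hsub
      _ ≤ ∫⁻ x, rieszPotential n α f x ^ r ∂μ := by
          simpa using mul_meas_ge_le_lintegral₀
            ((hmeas.pow_const r).aemeasurable) 1
      _ ≤ A * (∫⁻ y, f y ^ s) ^ (r / s) := htr f hf
  refine le_antisymm ?_ zero_le
  refine ENNReal.le_of_forall_pos_le_add fun ε hε _ => ?_
  rw [zero_add]
  set δ : ℝ≥0∞ := ((ε : ℝ≥0∞) / (A + 1)) ^ (s / r) with hδ
  have hA1 : A + 1 ≠ ⊤ := by simp [hA]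
  have hδpos : 0 < δ := by
    apply ENNReal.rpow_pos
    · exact ENNReal.div_pos (by exact_mod_cast hε.ne') hA1
    · exact (ENNReal.div_lt_top coe_ne_top (by simp)).ne
  have hlt : rieszCap n α s N < δ := by rw [hN]; exact hδpos
  rw [rieszCap] at hlt
  obtain ⟨f, hflt⟩ := iInf_lt_iff.1 hlt
  obtain ⟨⟨hfm, hf1⟩, hval⟩ := iInf_lt_iff.1 hflt
  have hpow : (∫⁻ y, f y ^ s) ^ (r / s) ≤ (ε : ℝ≥0∞) / (A + 1) := by
    have := ENNReal.rpow_le_rpow hval.le (by positivity : (0:ℝ) ≤ r / s)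
    rwa [hδ, ← ENNReal.rpow_mul, div_mul_div_comm, mul_comm s r,
      div_self (by positivity : r * s ≠ 0), ENNReal.rpow_one] at this
  calc μ N ≤ A * (∫⁻ y, f y ^ s) ^ (r / s) := key f hfm hf1
    _ ≤ (A + 1) * ((ε : ℝ≥0∞) / (A + 1)) := by
        exact mul_le_mul' le_self_add hpow
    _ ≤ ε := ENNReal.mul_div_le
end
end

section
/- Let p > 1 with p' = p/(p-1), and let w = ‖{c_j}‖_{ℓ¹}^{-1} Σ_j |c_j| w_j, where {c_j} ∈ ℓ¹ with not all c_j zero and w_j are nonnegative measurable functions. Then for any measurable functions b_j and g = Σ_j c_j b_j (a.e. absolutely convergent), the pointwise inequality |g|^{p'} w^{1-p'} ≤ ‖{c_j}‖_{ℓ¹}^{p'-1} Σ_j |c_j| |b_j|^{p'} w_j^{1-p'} holds a.e. (with the convention that |b|^{p'} v^{1-p'} = 0 when b = 0, and = +∞ when b ≠ 0 and v = 0). -/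
open MeasureTheory ENNReal Set Filter

noncomputable section

set_option maxHeartbeats 1000000 in
/-- pointwise Hölder estimate: with w = ‖{c_j}‖_{ℓ¹}^{-1} Σ |c_j| w_j and
g = Σ c_j b_j a.e. (absolutely convergent), a.e.
|g|^{p'} w^{1-p'} ≤ ‖{c_j}‖_{ℓ¹}^{p'-1} Σ_j |c_j| |b_j|^{p'} w_j^{1-p'}. -/
theorem stmt19 (n : ℕ) (p : ℝ) (hp : 1 < p)
    (c : ℕ → ℝ) (hc : Summable fun j => |c j|) (hc0 : (∑' j, |c j|) ≠ 0)
    (w : ℕ → Rn n → ℝ≥0∞) (b : ℕ → Rn n → ℝ) (g : Rn n → ℝ)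
    (habs : ∀ᵐ x, Summable fun j => |c j| * |b j x|)
    (hg : ∀ᵐ x, g x = ∑' j, c j * b j x) :
    ∀ᵐ x : Rn n,
      ENNReal.ofReal |g x| ^ (p / (p - 1)) *
          ((ENNReal.ofReal (∑' j, |c j|))⁻¹ *
            ∑' j, ENNReal.ofReal |c j| * w j x) ^ (1 - p / (p - 1)) ≤
        ENNReal.ofReal (∑' j, |c j|) ^ (p / (p - 1) - 1) *
          ∑' j, ENNReal.ofReal |c j| *
            (ENNReal.ofReal |b j x| ^ (p / (p - 1)) * w j x ^ (1 - p / (p - 1))) := by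
  filter_upwards [habs, hg] with x habs hg
  set p' := p / (p - 1) with hp'def
  have hpq : p.HolderConjugate p' := Real.HolderConjugate.conjExponent hp
  have hp0 : (0 : ℝ) < p := hpq.pos
  have hp'1 : 1 < p' := hpq.symm.lt
  have hp'0 : (0 : ℝ) < p' := by linarith
  have hneg : 1 - p' < 0 := by linarith
  have hp1 : p - 1 ≠ 0 := ne_of_gt (by linarith)
  have hconj : 1 / p + 1 / p' = 1 := by
    have := hpq.inv_add_inv_eq_one
    simpa [one_div] using this
  set a : ℕ → ℝ≥0∞ := fun j => ENNReal.ofReal |c j| with hadef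
  set B : ℕ → ℝ≥0∞ := fun j => ENNReal.ofReal |b j x| with hBdef
  set S : ℝ≥0∞ := ENNReal.ofReal (∑' j, |c j|) with hSdef
  set W : ℝ≥0∞ := ∑' j, a j * w j x with hWdef
  set R : ℝ≥0∞ := ∑' j, a j * (B j ^ p' * w j x ^ (1 - p')) with hRdef
  have hS0 : S ≠ 0 := by
    have : (0:ℝ) < ∑' j, |c j| := lt_of_le_of_ne (tsum_nonneg fun j => abs_nonneg _) (Ne.symm hc0)
    simpa [hSdef] using (ENNReal.ofReal_pos.mpr this).ne'
  have hStop : S ≠ ⊤ := ENNReal.ofReal_ne_top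
  have hSpow0 : S ^ (p' - 1) ≠ 0 := by
    simp [ENNReal.rpow_eq_zero_iff, hS0, hStop]
  by_cases hWtop : W = ⊤
  · have h1 : S⁻¹ * W = ⊤ := by
      rw [hWtop, ENNReal.mul_top]
      simpa using hStop
    rw [h1, ENNReal.top_rpow_of_neg hneg, mul_zero]
    exact zero_le
  by_cases hterm : ∃ j, a j ≠ 0 ∧ B j ≠ 0 ∧ w j x = 0
  · obtain ⟨j, haj, hBj, hwj⟩ := hterm
    have hle : a j * (B j ^ p' * w j x ^ (1 - p')) ≤ R := ENNReal.le_tsum j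
    have hj : a j * (B j ^ p' * w j x ^ (1 - p')) = ⊤ := by
      rw [hwj, ENNReal.zero_rpow_of_neg hneg]
      rw [ENNReal.mul_top, ENNReal.mul_top] <;>
        simp [haj, hBj, ENNReal.rpow_eq_zero_iff, hp'0, hp'0.le]
    have hRtop : R = ⊤ := top_le_iff.mp (hj ▸ hle)
    rw [hRtop, ENNReal.mul_top hSpow0]
    exact le_top
  push_neg at hterm
  -- Step A : ofReal |g x| ≤ T := ∑' a j * B j
  set T : ℝ≥0∞ := ∑' j, a j * B j with hTdef
  have hsum2 : Summable fun j => |c j| * |b j x| := habs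
  have hT0 : ENNReal.ofReal |g x| ≤ T := by
    have h1 : |g x| ≤ ∑' j, |c j| * |b j x| := by
      rw [hg]
      calc |∑' j, c j * b j x| ≤ ∑' j, ‖c j * b j x‖ :=
            norm_tsum_le_tsum_norm (f := fun j => c j * b j x) (by simpa [abs_mul] using hsum2)
        _ = ∑' j, |c j| * |b j x| := by simp [abs_mul]
    calc ENNReal.ofReal |g x| ≤ ENNReal.ofReal (∑' j, |c j| * |b j x|) :=
          ENNReal.ofReal_le_ofReal h1
      _ = ∑' j, ENNReal.ofReal (|c j| * |b j x|) :=
          ENNReal.ofReal_tsum_of_nonneg (fun j => by positivity) hsum2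
      _ = T := tsum_congr fun j => ENNReal.ofReal_mul (abs_nonneg _)
  -- Step B : Hölder
  have hwfin : ∀ j, a j ≠ 0 → w j x ≠ ⊤ := by
    intro j haj hwj
    apply hWtop
    have h1 : a j * w j x = ⊤ := by rw [hwj, ENNReal.mul_top haj]
    exact top_le_iff.mp (h1 ▸ (ENNReal.le_tsum j : a j * w j x ≤ W))
  have hHolder : T ≤ W ^ (1 / p) * R ^ (1 / p') := by
    set f : ℕ → ℝ≥0∞ := fun j => (a j * w j x) ^ (1 / p) with hfdef
    set G : ℕ → ℝ≥0∞ := fun j => a j ^ (1 / p') * B j * w j x ^ (-(1 / p)) with hGdef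
    have key : ∀ j, a j * B j ≤ f j * G j := by
      intro j
      rcases eq_or_ne (a j) 0 with haj | haj
      · simp [haj]
      rcases eq_or_ne (B j) 0 with hBj | hBj
      · simp [hBj]
      have hwj0 : w j x ≠ 0 := hterm j haj hBj
      have hwjt : w j x ≠ ⊤ := hwfin j haj
      have hat : a j ≠ ⊤ := ENNReal.ofReal_ne_top
      have heq : f j * G j = a j * B j := by
        show (a j * w j x) ^ (1 / p) * (a j ^ (1 / p') * B j * w j x ^ (-(1 / p)))
            = a j * B j
        rw [ENNReal.mul_rpow_of_ne_top hat hwjt]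
        have e1 : a j ^ (1 / p) * (w j x) ^ (1 / p) * (a j ^ (1 / p') * B j * w j x ^ (-(1 / p)))
            = (a j ^ (1 / p) * a j ^ (1 / p')) * (w j x ^ (1 / p) * w j x ^ (-(1 / p))) * B j := by
          ring
        rw [e1, ← ENNReal.rpow_add _ _ haj hat, ← ENNReal.rpow_add _ _ hwj0 hwjt, hconj,
          add_neg_cancel, ENNReal.rpow_one, ENNReal.rpow_zero, mul_one]
      rw [heq]
    have hfp : (∑' j, f j ^ p) = W := by
      rw [hWdef]
      refine tsum_congr fun j => ?_
      show ((a j * w j x) ^ (1 / p)) ^ p = a j * w j x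
      rw [← ENNReal.rpow_mul, one_div_mul_cancel hp0.ne', ENNReal.rpow_one]
    have hGq : (∑' j, G j ^ p') = R := by
      rw [hRdef]
      refine tsum_congr fun j => ?_
      show (a j ^ (1 / p') * B j * w j x ^ (-(1 / p))) ^ p'
          = a j * (B j ^ p' * w j x ^ (1 - p'))
      rw [ENNReal.mul_rpow_of_nonneg _ _ hp'0.le, ENNReal.mul_rpow_of_nonneg _ _ hp'0.le,
        ← ENNReal.rpow_mul, ← ENNReal.rpow_mul, one_div_mul_cancel hp'0.ne',
        ENNReal.rpow_one]
      have e2 : -(1 / p) * p' = 1 - p' := by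
        rw [hp'def]
        field_simp
        ring
      rw [e2, mul_assoc]
    have H := ENNReal.lintegral_mul_le_Lp_mul_Lq (Measure.count : Measure ℕ) hpq
      measurable_from_nat.aemeasurable (f := f) (g := G) measurable_from_nat.aemeasurable
    simp only [Pi.mul_apply] at H
    rw [lintegral_count, lintegral_count, lintegral_count, hfp, hGq] at H
    exact le_trans (ENNReal.tsum_le_tsum key) H
  -- Step C : conclude
  by_cases hW0 : W = 0
  · have hT : T = 0 := by
      have := hHolder
      rw [hW0, ENNReal.zero_rpow_of_pos (by positivity), zero_mul] at this
      exact le_antisymm this zero_le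
    have hg0 : ENNReal.ofReal |g x| = 0 := le_antisymm (hT ▸ hT0) zero_le
    rw [hg0, ENNReal.zero_rpow_of_pos hp'0, zero_mul]
    exact zero_le
  have hsplit : (S⁻¹ * W) ^ (1 - p') = S ^ (p' - 1) * W ^ (1 - p') := by
    rw [ENNReal.mul_rpow_of_ne_zero (ENNReal.inv_ne_zero.mpr hStop) hW0,
      ENNReal.inv_rpow, ← ENNReal.rpow_neg, neg_sub]
  rw [hsplit]
  have hmain : ENNReal.ofReal |g x| ^ p' * W ^ (1 - p') ≤ R := by
    have h1 : ENNReal.ofReal |g x| ^ p' ≤ W ^ (1 / p * p') * R := by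
      calc ENNReal.ofReal |g x| ^ p' ≤ (W ^ (1 / p) * R ^ (1 / p')) ^ p' :=
            ENNReal.rpow_le_rpow (hT0.trans hHolder) hp'0.le
        _ = W ^ (1 / p * p') * R := by
            rw [ENNReal.mul_rpow_of_nonneg _ _ hp'0.le, ← ENNReal.rpow_mul,
              ← ENNReal.rpow_mul, one_div_mul_cancel hp'0.ne', ENNReal.rpow_one]
    calc ENNReal.ofReal |g x| ^ p' * W ^ (1 - p')
        ≤ W ^ (1 / p * p') * R * W ^ (1 - p') := mul_le_mul_left h1 _
      _ = R * (W ^ (1 / p * p') * W ^ (1 - p')) := by ring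
      _ = R := by
          rw [← ENNReal.rpow_add _ _ hW0 hWtop]
          have e3 : 1 / p * p' + (1 - p') = 0 := by
            rw [hp'def]
            field_simp
            ring
          rw [e3, ENNReal.rpow_zero, mul_one]
  calc ENNReal.ofReal |g x| ^ p' * (S ^ (p' - 1) * W ^ (1 - p'))
      = S ^ (p' - 1) * (ENNReal.ofReal |g x| ^ p' * W ^ (1 - p')) := by ring
    _ ≤ S ^ (p' - 1) * R := mul_le_mul_right hmain _
end
end
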